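/- arXiv:1803.02966 — 8 statements merged into one kernel-verified Lean document; each statement's English description precedes it below -/
import Mathlib

section
/- For every prime p > 3, the harmonic number H_{p-1} = ∑_{j=1}^{p-1} 1/j, viewed as a rational number, has numerator divisible by p² (equivalently, H_{p-1} ≡ 0 (mod p²) in the sense that its p-adic valuation is at least 2). -/
open Finset

/-- Harmonic number `H n = ∑_{j=1}^n 1/j`. -/
def H (n : ℕ) : ℚ := ∑ j ∈ Finset.Icc 1 n, (1 : ℚ) / j

/-- Generalized harmonic number `H_n^{(α)} = ∑_{i=1}^n 1/i^α`. -/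
def Hgen (n α : ℕ) : ℚ := ∑ i ∈ Finset.Icc 1 n, (1 : ℚ) / (i : ℚ) ^ α

/-- `S m = ∑_{r=0}^m C(m+1,r) B_r B_{m-r}`. -/
def S (m : ℕ) : ℚ := ∑ r ∈ Finset.range (m + 1),
  ((m + 1).choose r : ℚ) * bernoulli r * bernoulli (m - r)

/-- Sum of squares of inverses of nonzero residues mod p vanishes for p > 3. -/
lemma sum_inv_sq_eq_zero (p : ℕ) (hp : p.Prime) (hp3 : 3 < p) :
    ∑ j ∈ Finset.Icc 1 (p - 1), ((j : ZMod p)⁻¹) ^ 2 = 0 := by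
  haveI : Fact p.Prime := ⟨hp⟩
  have hcard : Fintype.card (ZMod p) = p := ZMod.card p
  have h1 : ∑ j ∈ Finset.Icc 1 (p - 1), ((j : ZMod p)⁻¹) ^ 2
      = ∑ x ∈ (Finset.univ \ {0} : Finset (ZMod p)), (x⁻¹) ^ 2 := by
    refine Finset.sum_nbij' (fun j => (j : ZMod p)) (fun x => x.val) ?_ ?_ ?_ ?_ ?_
    · intro a ha
      simp only [Finset.mem_Icc] at ha
      simp only [Finset.mem_sdiff, Finset.mem_univ, Finset.mem_singleton, true_and]
      intro h
      rw [ZMod.natCast_eq_zero_iff] at h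
      have := Nat.le_of_dvd (by omega) h
      omega
    · intro x hx
      simp only [Finset.mem_sdiff, Finset.mem_univ, Finset.mem_singleton, true_and] at hx
      have h0 : x.val ≠ 0 := fun h => hx ((ZMod.val_eq_zero x).mp h)
      have hlt : x.val < p := ZMod.val_lt x
      simp only [Finset.mem_Icc]; omega
    · intro a ha
      simp only [Finset.mem_Icc] at ha
      exact ZMod.val_cast_of_lt (by omega)
    · intro x hx
      simp [ZMod.natCast_val, ZMod.cast_id]
    · intro a ha; rfl
  have h2 : ∑ x ∈ (Finset.univ \ {0} : Finset (ZMod p)), (x⁻¹) ^ 2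
      = ∑ x ∈ (Finset.univ \ {0} : Finset (ZMod p)), x ^ 2 := by
    refine Finset.sum_nbij' (fun x => x⁻¹) (fun x => x⁻¹) ?_ ?_ ?_ ?_ ?_
    · intro a ha
      simp only [Finset.mem_sdiff, Finset.mem_univ, Finset.mem_singleton, true_and] at ha ⊢
      exact inv_ne_zero ha
    · intro a ha
      simp only [Finset.mem_sdiff, Finset.mem_univ, Finset.mem_singleton, true_and] at ha ⊢
      exact inv_ne_zero ha
    · intro a _; exact inv_inv a
    · intro a _; exact inv_inv a
    · intro a _; rfl
  have h3 : ∑ x ∈ (Finset.univ \ {0} : Finset (ZMod p)), x ^ 2 = ∑ x : ZMod p, x ^ 2 := by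
    rw [← Finset.sum_sdiff (Finset.subset_univ ({0} : Finset (ZMod p)))]
    simp
  rw [h1, h2, h3]
  exact FiniteField.sum_pow_lt_card_sub_one (ZMod p) 2 (by rw [hcard]; omega)

theorem stmt0 (p : ℕ) (hp : p.Prime) (hp3 : 3 < p) :
    (p : ℤ) ^ 2 ∣ (H (p - 1)).num := by
  haveI : Fact p.Prime := ⟨hp⟩
  set n := p - 1 with hn
  have hn1 : 1 ≤ n := by omega
  set N : ℤ := (Nat.factorial n : ℤ) with hN
  have hN0 : N ≠ 0 := by
    simp [hN, Nat.factorial_ne_zero]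
  -- divisibility facts
  have hdvd1 : ∀ j ∈ Finset.Icc 1 n, (j : ℤ) ∣ N := by
    intro j hj
    simp only [Finset.mem_Icc] at hj
    rw [hN]
    exact_mod_cast Nat.dvd_factorial (by omega) hj.2
  have hne : ∀ j ∈ Finset.Icc 1 n, j ≠ p - j := by
    intro j hj hc
    simp only [Finset.mem_Icc] at hj
    obtain ⟨k, hk⟩ := hp.odd_of_ne_two (by omega)
    omega
  have hdvd2 : ∀ j ∈ Finset.Icc 1 n, ((j * (p - j) : ℕ) : ℤ) ∣ N := by
    intro j hj
    have hmem : j ∈ Finset.Icc 1 n := hj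
    simp only [Finset.mem_Icc] at hj
    have hsub : ({j, p - j} : Finset ℕ) ⊆ Finset.Icc 1 n := by
      intro x hx
      simp only [Finset.mem_insert, Finset.mem_singleton] at hx
      simp only [Finset.mem_Icc]
      rcases hx with rfl | rfl <;> omega
    have hdvd : j * (p - j) ∣ Nat.factorial n := by
      have h1 : (∏ x ∈ ({j, p - j} : Finset ℕ), x) ∣ ∏ x ∈ Finset.Icc 1 n, x :=
        Finset.prod_dvd_prod_of_subset _ _ _ hsub
      rw [Finset.prod_pair (hne j hmem)] at h1
      have h2 : (∏ x ∈ Finset.Icc 1 n, x) = Nat.factorial n := by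
        rw [← Finset.Ico_add_one_right_eq_Icc]
        exact Finset.prod_Ico_id_eq_factorial n
      rwa [h2] at h1
    rw [hN]
    exact_mod_cast hdvd
  set A : ℤ := ∑ j ∈ Finset.Icc 1 n, N / (j : ℤ) with hA
  set B : ℤ := ∑ j ∈ Finset.Icc 1 n, N / ((j * (p - j) : ℕ) : ℤ) with hB
  -- Step (b): p ∣ B
  have hpB : (p : ℤ) ∣ B := by
    rw [← ZMod.intCast_zmod_eq_zero_iff_dvd, hB, Int.cast_sum]
    have hterm : ∀ j ∈ Finset.Icc 1 n,
        ((N / ((j * (p - j) : ℕ) : ℤ) : ℤ) : ZMod p)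
          = (N : ZMod p) * (-(((j : ZMod p)) ^ 2))⁻¹ := by
      intro j hj
      have hjm := hj
      simp only [Finset.mem_Icc] at hj
      have hc : (((j * (p - j) : ℕ) : ℤ) : ZMod p) = -((j : ZMod p)) ^ 2 := by
        push_cast [Nat.cast_sub (by omega : j ≤ p)]
        rw [ZMod.natCast_self]
        ring
      have hc0 : (((j * (p - j) : ℕ) : ℤ) : ZMod p) ≠ 0 := by
        rw [hc]
        have hj0 : ((j : ZMod p)) ≠ 0 := by
          intro h
          rw [ZMod.natCast_eq_zero_iff] at h
          have := Nat.le_of_dvd (by omega) h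
          omega
        exact neg_ne_zero.mpr (pow_ne_zero 2 hj0)
      have heq : ((N / ((j * (p - j) : ℕ) : ℤ) : ℤ) : ZMod p)
          * (((j * (p - j) : ℕ) : ℤ) : ZMod p) = (N : ZMod p) := by
        rw [← Int.cast_mul, Int.ediv_mul_cancel (hdvd2 j hjm)]
      rw [eq_mul_inv_iff_mul_eq₀ (by rw [← hc]; exact hc0), ← hc]
      exact heq
    rw [Finset.sum_congr rfl hterm]
    have : ∀ j ∈ Finset.Icc 1 n,
        (N : ZMod p) * (-(((j : ZMod p)) ^ 2))⁻¹ = -(N : ZMod p) * (((j : ZMod p))⁻¹) ^ 2 := by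
      intro j _
      rw [inv_neg, inv_pow]
      ring
    rw [Finset.sum_congr rfl this, ← Finset.mul_sum, sum_inv_sq_eq_zero p hp hp3, mul_zero]
  -- Step (a): 2 * A = p * B
  have hrev : A = ∑ j ∈ Finset.Icc 1 n, N / ((p - j : ℕ) : ℤ) := by
    rw [hA]
    refine Finset.sum_nbij' (fun j => p - j) (fun j => p - j) ?_ ?_ ?_ ?_ ?_
    all_goals simp only [Finset.mem_Icc]
    · intro a ha; omega
    · intro a ha; omega
    · intro a ha; omega
    · intro a ha; omega
    · intro a ha
      congr 2
      omega
  have h2A : 2 * A = (p : ℤ) * B := by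
    have hterm : ∀ j ∈ Finset.Icc 1 n,
        N / (j : ℤ) + N / ((p - j : ℕ) : ℤ) = (p : ℤ) * (N / ((j * (p - j) : ℕ) : ℤ)) := by
      intro j hjm
      have hj := hjm
      simp only [Finset.mem_Icc] at hj
      have hd1 : (j : ℤ) ∣ N := hdvd1 j hjm
      have hd2 : ((p - j : ℕ) : ℤ) ∣ N := by
        have : (p - j) ∈ Finset.Icc 1 n := by simp only [Finset.mem_Icc]; omega
        exact_mod_cast hdvd1 (p - j) this
      have hd3 : ((j * (p - j) : ℕ) : ℤ) ∣ N := hdvd2 j hjm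
      have hc0 : ((j * (p - j) : ℕ) : ℤ) ≠ 0 := by
        have : 1 ≤ j * (p - j) := by
          have : 1 ≤ p - j := by omega
          nlinarith [hj.1]
        exact_mod_cast by omega
      apply mul_right_cancel₀ hc0
      have hcast : ((j * (p - j) : ℕ) : ℤ) = (j : ℤ) * ((p - j : ℕ) : ℤ) := by push_cast; ring
      calc (N / (j : ℤ) + N / ((p - j : ℕ) : ℤ)) * ((j * (p - j) : ℕ) : ℤ)
          = (N / (j : ℤ) * (j : ℤ)) * ((p - j : ℕ) : ℤ)
            + (N / ((p - j : ℕ) : ℤ) * ((p - j : ℕ) : ℤ)) * (j : ℤ) := by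
            rw [hcast]; ring
        _ = N * ((p - j : ℕ) : ℤ) + N * (j : ℤ) := by
            rw [Int.ediv_mul_cancel hd1, Int.ediv_mul_cancel hd2]
        _ = N * (((p - j : ℕ) : ℤ) + (j : ℤ)) := by ring
        _ = N * (p : ℤ) := by
            congr 1
            have : (p - j) + j = p := by omega
            exact_mod_cast congrArg (Nat.cast : ℕ → ℤ) this
        _ = (p : ℤ) * (N / ((j * (p - j) : ℕ) : ℤ)) * ((j * (p - j) : ℕ) : ℤ) := by
            rw [mul_assoc, Int.ediv_mul_cancel hd3]; ring
    calc 2 * A = A + A := by ring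
      _ = ∑ j ∈ Finset.Icc 1 n, (N / (j : ℤ) + N / ((p - j : ℕ) : ℤ)) := by
          rw [Finset.sum_add_distrib, ← hA, ← hrev]
      _ = ∑ j ∈ Finset.Icc 1 n, (p : ℤ) * (N / ((j * (p - j) : ℕ) : ℤ)) :=
          Finset.sum_congr rfl hterm
      _ = (p : ℤ) * B := by rw [hB, Finset.mul_sum]
  -- p^2 ∣ A
  have hpprime : Prime (p : ℤ) := Nat.prime_iff_prime_int.mp hp
  have hp2A : (p : ℤ) ^ 2 ∣ 2 * A := by
    obtain ⟨m, hm⟩ := hpB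
    rw [h2A, hm]
    exact ⟨m, by ring⟩
  have hcop2 : IsCoprime ((p : ℤ) ^ 2) 2 := by
    apply IsCoprime.pow_left
    rw [hpprime.coprime_iff_not_dvd]
    intro hdvd
    have := Int.le_of_dvd (by norm_num) hdvd
    omega
  have hp2Advd : (p : ℤ) ^ 2 ∣ A := hcop2.dvd_of_dvd_mul_left hp2A
  -- relate A to the numerator of H
  have hcastA : (A : ℚ) = (N : ℚ) * H n := by
    rw [hA, H]
    push_cast
    rw [Finset.mul_sum]
    refine Finset.sum_congr rfl ?_
    intro j hjm
    simp only [Finset.mem_Icc] at hjm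
    have hj0 : ((j : ℤ) : ℚ) ≠ 0 := by
      exact_mod_cast (by omega : (j : ℤ) ≠ 0)
    rw [Int.cast_div (hdvd1 j (by simp only [Finset.mem_Icc]; omega)) hj0]
    push_cast
    ring
  have hnum : (H n).num * N = A * ((H n).den : ℤ) := by
    have hden0 : ((H n).den : ℚ) ≠ 0 := by exact_mod_cast (H n).den_nz
    have : (((H n).num * N : ℤ) : ℚ) = ((A * ((H n).den : ℤ) : ℤ) : ℚ) := by
      push_cast
      rw [hcastA]
      have hnd : ∀ q : ℚ, (q.num : ℚ) = q * (q.den : ℚ) := by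
        intro q
        have hq : ((q.den : ℚ)) ≠ 0 := by exact_mod_cast q.den_nz
        have h := Rat.num_div_den q
        rw [div_eq_iff hq] at h
        exact h
      rw [hnd (H n)]
      ring
    exact_mod_cast this
  have hpN : ¬ (p : ℤ) ∣ N := by
    rw [hN, Int.natCast_dvd_natCast, hp.dvd_factorial]
    omega
  have hcopN : IsCoprime ((p : ℤ) ^ 2) N :=
    IsCoprime.pow_left (hpprime.coprime_iff_not_dvd.mpr hpN)
  have hfin : (p : ℤ) ^ 2 ∣ (H n).num * N := hnum ▸ Dvd.dvd.mul_right hp2Advd _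
  exact hcopN.dvd_of_dvd_mul_right hfin
end

section
/- For all positive integers m and p, ∑_{k=1}^{p-1} k^m · H_k = (H_{p-1}/(m+1)) · ∑_{r=0}^m C(m+1,r) B_r p^{m+1-r} − (p−1) B_m − (1/(m+1)) ∑_{r=0}^{m-1} ∑_{λ=0}^{m-r} [C(m+1,r) C(m+1−r,λ)/(m+1−r)] B_r B_λ p^{m+1−r−λ}, as an identity of rational numbers. -/
open Finset

lemma swapsum (n : ℕ) (f g : ℕ → ℚ) :
    ∑ k ∈ Icc 1 n, f k * ∑ j ∈ Icc 1 k, g j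
      = ∑ j ∈ Icc 1 n, g j * ∑ k ∈ Icc j n, f k := by
  induction n with
  | zero => simp
  | succ n ih =>
    have h1 : ∀ j ∈ Icc 1 n, g j * ∑ k ∈ Icc j (n+1), f k
        = g j * ∑ k ∈ Icc j n, f k + g j * f (n+1) := by
      intro j hj
      rw [sum_Icc_succ_top (by simp at hj; omega), mul_add]
    have hR : ∑ j ∈ Icc 1 (n+1), g j * ∑ k ∈ Icc j (n+1), f k
        = (∑ j ∈ Icc 1 n, (g j * ∑ k ∈ Icc j n, f k + g j * f (n+1))) + g (n+1) * f (n+1) := by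
      rw [sum_Icc_succ_top (by omega)]
      congr 1
      · exact sum_congr rfl h1
      · rw [Icc_self, sum_singleton]
    rw [sum_Icc_succ_top (by omega), ih, hR, sum_add_distrib, sum_Icc_succ_top (by omega) g,
      ← sum_mul]
    ring

theorem stmt4 (m p : ℕ) (hm : 0 < m) (hp : 0 < p) :
    ∑ k ∈ Finset.Icc 1 (p - 1), (k : ℚ) ^ m * H k =
      H (p - 1) / (m + 1) *
        ∑ r ∈ Finset.range (m + 1), ((m + 1).choose r : ℚ) * bernoulli r * (p : ℚ) ^ (m + 1 - r)
      - ((p : ℚ) - 1) * bernoulli m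
      - 1 / (m + 1) *
        ∑ r ∈ Finset.range m, ∑ l ∈ Finset.range (m - r + 1),
          (((m + 1).choose r : ℚ) * ((m + 1 - r).choose l : ℚ) / ((m : ℚ) + 1 - r)) *
            bernoulli r * bernoulli l * (p : ℚ) ^ (m + 1 - r - l) := by
  set n := p - 1 with hn'
  have hn : n + 1 = p := Nat.succ_pred_eq_of_pos hp
  have hm1 : ((m : ℚ) + 1) ≠ 0 := by positivity
  set Sp : ℚ := ∑ k ∈ range p, (k : ℚ) ^ m with hSp
  set F : ℕ → ℚ := fun j => ∑ k ∈ range j, (k : ℚ) ^ m with hF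
  -- Step 1+2+3
  have step1 : ∑ k ∈ Icc 1 n, (k : ℚ) ^ m * H k
      = ∑ j ∈ Icc 1 n, (1 : ℚ) / j * ∑ k ∈ Icc j n, (k : ℚ) ^ m := by
    simp only [H]
    exact swapsum n (fun k => (k : ℚ) ^ m) (fun j => (1 : ℚ) / j)
  have step2 : ∀ j ∈ Icc 1 n, ∑ k ∈ Icc j n, (k : ℚ) ^ m = Sp - F j := by
    intro j hj
    simp only [mem_Icc] at hj
    rw [← Finset.Ico_add_one_right_eq_Icc, hn, sum_Ico_eq_sub _ (by omega)]
  have step3 : ∑ k ∈ Icc 1 n, (k : ℚ) ^ m * H k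
      = H n * Sp - ∑ j ∈ Icc 1 n, (1 : ℚ) / j * F j := by
    rw [step1, sum_congr rfl (fun j hj => by rw [step2 j hj])]
    simp only [mul_sub]
    rw [sum_sub_distrib, H, ← sum_mul]
  -- compute T
  have hT1 : ∀ j ∈ Icc 1 n, (1 : ℚ) / j * F j
      = ∑ r ∈ range (m+1), bernoulli r * ((m+1).choose r) * (j : ℚ) ^ (m - r) / (m+1) := by
    intro j hj
    simp only [mem_Icc] at hj
    have hj0 : (j : ℚ) ≠ 0 := Nat.cast_ne_zero.mpr (by omega)
    rw [hF]
    simp only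
    rw [sum_range_pow j m, mul_sum]
    refine sum_congr rfl fun i hi => ?_
    simp only [mem_range] at hi
    have he : m + 1 - i = (m - i) + 1 := by omega
    rw [he, pow_succ]
    field_simp
  have hT2 : ∑ j ∈ Icc 1 n, (1 : ℚ) / j * F j
      = ∑ r ∈ range (m+1),
          bernoulli r * ((m+1).choose r) / (m+1) * ∑ j ∈ Icc 1 n, (j : ℚ) ^ (m - r) := by
    rw [sum_congr rfl hT1, sum_comm]
    refine sum_congr rfl fun r _ => ?_
    rw [mul_sum]
    refine sum_congr rfl fun j _ => ?_
    ring
  -- last term of hT2 (r = m)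
  have hGm : ∑ j ∈ Icc 1 n, (j : ℚ) ^ (m - m) = (p : ℚ) - 1 := by
    simp only [Nat.sub_self, pow_zero, sum_const, Nat.card_Icc, nsmul_eq_mul, mul_one]
    have h1 : n + 1 - 1 = n := by omega
    rw [h1, hn', Nat.cast_sub hp]
    simp
  -- r < m terms
  have hGr : ∀ r ∈ range m, ∑ j ∈ Icc 1 n, (j : ℚ) ^ (m - r)
      = ∑ l ∈ range (m - r + 1),
          bernoulli l * ((m - r + 1).choose l) * (p : ℚ) ^ (m - r + 1 - l) / ((m - r + 1 : ℕ) : ℚ) := by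
    intro r hr
    simp only [mem_range] at hr
    have h0 : ∑ j ∈ range p, (j : ℚ) ^ (m - r) = ∑ j ∈ Icc 1 n, (j : ℚ) ^ (m - r) := by
      rw [range_eq_Ico, sum_eq_sum_Ico_succ_bot hp]
      have : ((0:ℕ) : ℚ) ^ (m - r) = 0 := by
        rw [Nat.cast_zero, zero_pow (by omega)]
      rw [this, zero_add, ← hn, Finset.Ico_add_one_right_eq_Icc]
    rw [← h0, sum_range_pow p (m - r)]
    refine sum_congr rfl fun l _ => ?_
    congr 1
    push_cast [Nat.cast_sub hr.le]
    ring
  -- assemble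
  rw [step3, hT2, sum_range_succ, hGm]
  have hchoose : ((m+1).choose m : ℚ) = (m : ℚ) + 1 := by
    rw [Nat.choose_succ_self_right]
    push_cast
    ring
  rw [hchoose]
  have hfirst : H n * Sp = H n / (↑m + 1) *
      ∑ r ∈ range (m + 1), ((m + 1).choose r : ℚ) * bernoulli r * (p : ℚ) ^ (m + 1 - r) := by
    rw [hSp, sum_range_pow p m, mul_sum, div_mul_eq_mul_div, mul_sum, sum_div]
    refine sum_congr rfl fun i _ => ?_
    ring
  have hsecond : ∑ r ∈ range m,
        bernoulli r * ((m+1).choose r) / (m+1) * ∑ j ∈ Icc 1 n, (j : ℚ) ^ (m - r)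
      = 1 / (m + 1) *
        ∑ r ∈ range m, ∑ l ∈ range (m - r + 1),
          (((m + 1).choose r : ℚ) * ((m + 1 - r).choose l : ℚ) / ((m : ℚ) + 1 - r)) *
            bernoulli r * bernoulli l * (p : ℚ) ^ (m + 1 - r - l) := by
    rw [mul_sum]
    refine sum_congr rfl fun r hr => ?_
    have hrm : r < m := mem_range.mp hr
    rw [hGr r hr, mul_sum, mul_sum]
    refine sum_congr rfl fun l _ => ?_
    have e1 : m + 1 - r = m - r + 1 := by omega
    have e2 : m + 1 - r - l = m - r + 1 - l := by omega
    have e3 : ((m : ℚ) + 1 - r) = ((m - r + 1 : ℕ) : ℚ) := by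
      push_cast [Nat.cast_sub (by omega : r ≤ m)]
      ring
    have e4 : ((m - r + 1 : ℕ) : ℚ) ≠ 0 := by positivity
    rw [e1, e3]
    field_simp
  rw [hfirst, hsecond]
  field_simp
  ring
end

section
/- Let m > 0 be an odd integer with m ≠ 3. Then (2/(m+1)) ∑_{r=0}^{m} ∑_{λ=0}^{m-r} [C(m+1,r) C(m+1−r,λ)/(m+1−r)] B_r B_λ B_{m−r−λ} + (1/(m+1)) ∑_{r=0}^{m-1} C(m+1,r) B_r B_{m−1−r} = −((m+2)/(2m)) ∑_{r=0}^{m-1} C(m,r) B_r B_{m−1−r} + (1/4) ∑_{r=0}^{m-1} B_r B_{m−1−r}, as an identity of rationals. -/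
open Finset

namespace Stmt5Aux

open scoped Nat

lemma bern_odd {n : ℕ} (h : Odd n) (h1 : 1 < n) : bernoulli n = 0 := by
  rw [bernoulli_eq_bernoulli'_of_ne_one (by omega)]
  exact bernoulli'_eq_zero_of_odd h h1

/-! ### The functional `J p = ∫₀¹ p`. -/

noncomputable def J (p : Polynomial ℚ) : ℚ := p.sum fun k a => a / (k + 1)

lemma J_monomial (k : ℕ) (c : ℚ) : J (Polynomial.monomial k c) = c / (k + 1) := by
  unfold J
  rw [Polynomial.sum_monomial_index]
  simp

lemma J_add (p q : Polynomial ℚ) : J (p + q) = J p + J q :=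
  Polynomial.sum_add_index p q _ (by simp) (by intros; rw [add_div])

lemma J_zero : J 0 = 0 := Polynomial.sum_zero_index _

noncomputable def Jhom : Polynomial ℚ →+ ℚ where
  toFun := J
  map_zero' := J_zero
  map_add' := J_add

lemma J_sum {ι : Type*} (s : Finset ι) (f : ι → Polynomial ℚ) :
    J (∑ i ∈ s, f i) = ∑ i ∈ s, J (f i) :=
  map_sum Jhom f s

lemma J_smul (c : ℚ) (p : Polynomial ℚ) : J (Polynomial.C c * p) = c * J p := by
  induction p using Polynomial.induction_on' with
  | add p q hp hq => rw [mul_add, J_add, J_add, hp, hq, mul_add]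
  | monomial k a =>
      rw [Polynomial.C_mul_monomial, J_monomial, J_monomial, mul_div_assoc]

lemma J_beta : ∀ (l k : ℕ),
    J (Polynomial.X ^ k * (1 - Polynomial.X) ^ l) = (k ! * l ! : ℚ) / (k + l + 1)! := by
  intro l
  induction l with
  | zero =>
      intro k
      simp only [pow_zero, mul_one, Nat.factorial_zero, Nat.cast_one, Nat.add_zero]
      rw [Polynomial.X_pow_eq_monomial, J_monomial, Nat.factorial_succ]
      have : (k ! : ℚ) ≠ 0 := by exact_mod_cast (Nat.factorial_pos k).ne'
      field_simp
      push_cast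
      ring
  | succ l ih =>
      intro k
      have key : Polynomial.X ^ k * ((1 : Polynomial ℚ) - Polynomial.X) ^ (l + 1)
            + Polynomial.X ^ (k + 1) * ((1 : Polynomial ℚ) - Polynomial.X) ^ l
          = Polynomial.X ^ k * ((1 : Polynomial ℚ) - Polynomial.X) ^ l := by
        ring
      have h := congrArg J key
      rw [J_add, ih k, ih (k + 1)] at h
      have h1 : k + 1 + l + 1 = k + l + 1 + 1 := by omega
      have h2 : k + (l + 1) + 1 = k + l + 1 + 1 := by omega
      rw [h1] at h
      rw [h2]
      have hkl : ((k + l + 1)! : ℚ) ≠ 0 := by exact_mod_cast (Nat.factorial_pos _).ne'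
      have hkl2 : ((k + l + 1 + 1)! : ℚ) ≠ 0 := by exact_mod_cast (Nat.factorial_pos _).ne'
      have h3 : J (Polynomial.X ^ k * (1 - Polynomial.X) ^ (l + 1))
          = (k ! : ℚ) * (l ! : ℚ) / ((k + l + 1)! : ℚ)
            - ((k + 1)! : ℚ) * (l ! : ℚ) / ((k + l + 1 + 1)! : ℚ) := by linarith
      rw [h3, Nat.factorial_succ (k + l + 1), Nat.factorial_succ k, Nat.factorial_succ l]
      push_cast
      field_simp
      ring

/-! ### Power series facts -/

open PowerSeries

lemma rescale_X_eq {A : Type*} [CommRing A] (a : A) :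
    rescale a (X : A⟦X⟧) = C a * X := by
  ext n
  rw [coeff_rescale, coeff_C_mul, coeff_X]
  split_ifs with h
  · subst h; rw [pow_one, mul_one]
  · rw [mul_zero, mul_zero]

noncomputable def PB : PowerSeries (Polynomial ℚ) := bernoulliPowerSeries (Polynomial ℚ)
noncomputable def uPS : PowerSeries (Polynomial ℚ) := rescale Polynomial.X PB
noncomputable def vPS : PowerSeries (Polynomial ℚ) := rescale (1 - Polynomial.X) PB
noncomputable def ePS : PowerSeries (Polynomial ℚ) := exp (Polynomial ℚ)
noncomputable def e1PS : PowerSeries (Polynomial ℚ) := rescale Polynomial.X ePS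
noncomputable def e2PS : PowerSeries (Polynomial ℚ) := rescale (1 - Polynomial.X) ePS

lemma coeff_PB (n : ℕ) :
    coeff n PB = Polynomial.C (bernoulli n / n !) := by
  rw [PB, bernoulliPowerSeries, coeff_mk, Polynomial.algebraMap_eq]

lemma coeff_uPS (n : ℕ) :
    coeff n uPS = Polynomial.X ^ n * Polynomial.C (bernoulli n / n !) := by
  rw [uPS, coeff_rescale, coeff_PB]

lemma coeff_vPS (n : ℕ) :
    coeff n vPS
      = (1 - Polynomial.X) ^ n * Polynomial.C (bernoulli n / n !) := by
  rw [vPS, coeff_rescale, coeff_PB]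

lemma f0PS : PB * (ePS - 1) = X := bernoulliPowerSeries_mul_exp_sub_one (Polynomial ℚ)

lemma f1PS : uPS * (e1PS - 1) = C Polynomial.X * X := by
  have h := congrArg (rescale Polynomial.X) f0PS
  rw [map_mul, map_sub, map_one, rescale_X_eq] at h
  exact h

lemma f2PS : vPS * (e2PS - 1) = C (1 - Polynomial.X) * X := by
  have h := congrArg (rescale (1 - Polynomial.X)) f0PS
  rw [map_mul, map_sub, map_one, rescale_X_eq] at h
  exact h

lemma f3PS : e1PS * e2PS = ePS := by
  rw [e1PS, e2PS, ePS, exp_mul_exp_eq_exp_add,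
    show Polynomial.X + ((1 : Polynomial ℚ) - Polynomial.X) = 1 from by ring, rescale_one]
  rfl

lemma ePS_ne : ePS - 1 ≠ 0 := by
  intro h
  have h1 := congrArg (coeff 1) h
  rw [map_sub] at h1
  simp only [ePS, coeff_exp, PowerSeries.coeff_one] at h1
  norm_num at h1

lemma masterPS : uPS * vPS * X
    = C (1 - Polynomial.X) * (uPS * PB * X)
      + C Polynomial.X * (vPS * PB * X)
      + C (Polynomial.X * (1 - Polynomial.X)) * (PB * X * X) := by
  apply mul_right_cancel₀ ePS_ne
  have hC : ∀ a b : Polynomial ℚ,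
      C a * C b = C (a * b) := by
    intro a b; rw [map_mul]
  linear_combination (vPS * e2PS * (X : PowerSeries (Polynomial ℚ))) * f1PS
    + ((X : PowerSeries (Polynomial ℚ)) * (C Polynomial.X * X + uPS)) * f2PS
    + (-(uPS * vPS * (X : PowerSeries (Polynomial ℚ)))) * f3PS
    + (-(C (1 - Polynomial.X) * X * uPS
        + C Polynomial.X * X * vPS
        + C (Polynomial.X * (1 - Polynomial.X)) * X * X)) * f0PS
    + ((X : PowerSeries (Polynomial ℚ)) ^ 3) * hC Polynomial.X (1 - Polynomial.X)

/-- Full-range Matiyasevich identity (all `k`). -/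
lemma matiyasevich (k : ℕ) :
    ((k : ℚ) + 3) * ∑ r ∈ range (k + 2), bernoulli r * bernoulli (k + 1 - r)
    = 2 * ∑ r ∈ range (k + 2), ((k + 3).choose r : ℚ) * bernoulli r * bernoulli (k + 1 - r)
      + ((k : ℚ) + 3) * ((k : ℚ) + 2) * ((k : ℚ) + 1) / 6 * bernoulli k := by
  have hfact : ∀ j : ℕ, ((j ! : ℚ)) ≠ 0 := fun j => by
    exact_mod_cast (Nat.factorial_pos j).ne'
  have hco := congrArg (coeff (k + 1 + 1)) masterPS
  rw [coeff_succ_mul_X, map_add, map_add, coeff_C_mul, coeff_C_mul, coeff_C_mul,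
    coeff_succ_mul_X, coeff_succ_mul_X, coeff_succ_mul_X] at hco
  have hco2 := congrArg J hco
  rw [J_add, J_add] at hco2
  -- left side
  have hL : J (coeff (k + 1) (uPS * vPS))
      = ∑ l ∈ range (k + 2), bernoulli l * bernoulli (k + 1 - l) / (k + 2)! := by
    rw [coeff_mul, Finset.Nat.sum_antidiagonal_eq_sum_range_succ_mk, J_sum]
    refine Finset.sum_congr rfl fun l hl => ?_
    have hlk : l ≤ k + 1 := by
      have := Finset.mem_range.mp hl; omega
    rw [coeff_uPS, coeff_vPS]
    have e : Polynomial.X ^ l * Polynomial.C (bernoulli l / l !)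
        * ((1 - Polynomial.X) ^ (k + 1 - l) * Polynomial.C (bernoulli (k + 1 - l) / (k + 1 - l)!))
        = Polynomial.C (bernoulli l / l ! * (bernoulli (k + 1 - l) / (k + 1 - l)!))
          * (Polynomial.X ^ l * (1 - Polynomial.X) ^ (k + 1 - l)) := by
      rw [Polynomial.C_mul]; ring
    rw [e, J_smul, J_beta]
    rw [show l + (k + 1 - l) + 1 = k + 2 from by omega]
    field_simp
  have hA : J ((1 - Polynomial.X) * coeff (k + 1) (uPS * PB))
      = ∑ l ∈ range (k + 2),
          bernoulli l * bernoulli (k + 1 - l) / (((l + 2)! : ℚ) * ((k + 1 - l)! : ℚ)) := by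
    rw [coeff_mul, Finset.Nat.sum_antidiagonal_eq_sum_range_succ_mk, Finset.mul_sum, J_sum]
    refine Finset.sum_congr rfl fun l hl => ?_
    rw [coeff_uPS, coeff_PB]
    have e : (1 - Polynomial.X) * (Polynomial.X ^ l * Polynomial.C (bernoulli l / l !)
          * Polynomial.C (bernoulli (k + 1 - l) / (k + 1 - l)!))
        = Polynomial.C (bernoulli l / l ! * (bernoulli (k + 1 - l) / (k + 1 - l)!))
          * (Polynomial.X ^ l * (1 - Polynomial.X) ^ 1) := by
      rw [Polynomial.C_mul]; ring
    rw [e, J_smul, J_beta, show l + 1 + 1 = l + 2 from by omega]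
    have h2 : ((l + 2)! : ℚ) ≠ 0 := hfact _
    field_simp
    ring
  have hB : J (Polynomial.X * coeff (k + 1) (vPS * PB))
      = ∑ l ∈ range (k + 2),
          bernoulli l * bernoulli (k + 1 - l) / (((l + 2)! : ℚ) * ((k + 1 - l)! : ℚ)) := by
    rw [coeff_mul, Finset.Nat.sum_antidiagonal_eq_sum_range_succ_mk, Finset.mul_sum, J_sum]
    refine Finset.sum_congr rfl fun l hl => ?_
    rw [coeff_vPS, coeff_PB]
    have e : Polynomial.X * ((1 - Polynomial.X) ^ l * Polynomial.C (bernoulli l / l !)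
          * Polynomial.C (bernoulli (k + 1 - l) / (k + 1 - l)!))
        = Polynomial.C (bernoulli l / l ! * (bernoulli (k + 1 - l) / (k + 1 - l)!))
          * (Polynomial.X ^ 1 * (1 - Polynomial.X) ^ l) := by
      rw [Polynomial.C_mul]; ring
    rw [e, J_smul, J_beta, show 1 + l + 1 = l + 2 from by omega]
    have h2 : ((l + 2)! : ℚ) ≠ 0 := hfact _
    field_simp
    ring
  have hC : J (Polynomial.X * (1 - Polynomial.X) * coeff (k + 1) (PB * X))
      = bernoulli k / (6 * (k ! : ℚ)) := by
    rw [coeff_succ_mul_X, coeff_PB]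
    have e : Polynomial.X * (1 - Polynomial.X) * Polynomial.C (bernoulli k / k !)
        = Polynomial.C (bernoulli k / k !)
          * (Polynomial.X ^ 1 * (1 - Polynomial.X) ^ 1) := by ring
    rw [e, J_smul, J_beta]
    norm_num [Nat.factorial]
    ring
  rw [hL, hA, hB, hC] at hco2
  -- now assemble
  set U : ℚ := ∑ r ∈ range (k + 2), bernoulli r * bernoulli (k + 1 - r) with hU
  set W : ℚ := ∑ r ∈ range (k + 2), ((k + 3).choose r : ℚ) * bernoulli r * bernoulli (k + 1 - r)
    with hW
  have hsum1 : ∑ l ∈ range (k + 2), bernoulli l * bernoulli (k + 1 - l) / ((k + 2)! : ℚ)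
      = U / ((k + 2)! : ℚ) := by
    rw [hU, Finset.sum_div]
  have hsum2 : ∑ l ∈ range (k + 2),
        bernoulli l * bernoulli (k + 1 - l) / (((l + 2)! : ℚ) * ((k + 1 - l)! : ℚ))
      = W / ((k + 3)! : ℚ) := by
    rw [hW, Finset.sum_div,
      ← Finset.sum_range_reflect
        (fun r => ((k + 3).choose r : ℚ) * bernoulli r * bernoulli (k + 1 - r) / ((k + 3)! : ℚ))
        (k + 2)]
    refine Finset.sum_congr rfl fun l hl => ?_
    have hlk : l ≤ k + 1 := by
      have := Finset.mem_range.mp hl; omega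
    rw [show k + 2 - 1 - l = k + 1 - l from by omega,
      show k + 1 - (k + 1 - l) = l from by omega]
    have hcc : (((k + 3).choose (k + 1 - l) : ℕ) : ℚ) = (((k + 3).choose (l + 2) : ℕ) : ℚ) := by
      rw [show k + 1 - l = k + 3 - (l + 2) from by omega,
        Nat.choose_symm (by omega : l + 2 ≤ k + 3)]
    rw [hcc]
    have hch := Nat.choose_mul_factorial_mul_factorial (show l + 2 ≤ k + 3 by omega)
    rw [show k + 3 - (l + 2) = k + 1 - l from by omega] at hch
    have hchq : (((k + 3).choose (l + 2) : ℚ)) * ((l + 2)! : ℚ) * ((k + 1 - l)! : ℚ)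
        = ((k + 3)! : ℚ) := by exact_mod_cast hch
    rw [div_eq_div_iff (by positivity) (by positivity)]
    linear_combination (-(bernoulli l * bernoulli (k + 1 - l))) * hchq
  rw [hsum1, hsum2] at hco2
  have hf2 : ((k + 3)! : ℚ) = ((k : ℚ) + 3) * ((k + 2)! : ℚ) := by
    rw [show k + 3 = (k + 2) + 1 from by omega, Nat.factorial_succ]
    push_cast; ring
  have hf3 : ((k + 3)! : ℚ) = ((k : ℚ) + 3) * ((k : ℚ) + 2) * ((k : ℚ) + 1) * (k ! : ℚ) := by
    rw [show k + 3 = (k + 2) + 1 from by omega, Nat.factorial_succ,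
      show k + 2 = (k + 1) + 1 from by omega, Nat.factorial_succ, Nat.factorial_succ]
    push_cast; ring
  have hk2 : ((k + 2)! : ℚ) ≠ 0 := hfact _
  have hk3 : ((k + 3)! : ℚ) ≠ 0 := hfact _
  have hk0 : ((k)! : ℚ) ≠ 0 := hfact _
  calc ((k : ℚ) + 3) * U = ((k + 3)! : ℚ) * (U / ((k + 2)! : ℚ)) := by
        rw [hf2]; field_simp
    _ = ((k + 3)! : ℚ) * (W / ((k + 3)! : ℚ) + W / ((k + 3)! : ℚ)
          + bernoulli k / (6 * (k ! : ℚ))) := by rw [hco2]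
    _ = 2 * W + ((k : ℚ) + 3) * ((k : ℚ) + 2) * ((k : ℚ) + 1) / 6 * bernoulli k := by
        rw [mul_add, mul_add, hf3]
        field_simp
        ring

/-- For odd `q`, `S q = -(q+1)(q+2)/4 * B_{q-1}`. -/
lemma S_odd {q : ℕ} (hq : Odd q) :
    S q = -(((q : ℚ) + 1) * ((q : ℚ) + 2) / 4) * bernoulli (q - 1) := by
  rcases eq_or_ne q 1 with rfl | hq1
  · rw [S]
    norm_num [Finset.sum_range_succ, bernoulli_one, bernoulli_zero]
  have hq3 : 3 ≤ q := by
    rcases hq with ⟨t, rfl⟩; omega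
  have hsub : ({1, q - 1} : Finset ℕ) ⊆ range (q + 1) := by
    intro x hx
    simp only [Finset.mem_insert, Finset.mem_singleton] at hx
    rcases hx with rfl | rfl <;> simp [Finset.mem_range] <;> omega
  have hzero : ∀ x ∈ range (q + 1), x ∉ ({1, q - 1} : Finset ℕ) →
      ((q + 1).choose x : ℚ) * bernoulli x * bernoulli (q - x) = 0 := by
    intro x hx hnot
    simp only [Finset.mem_insert, Finset.mem_singleton, not_or] at hnot
    obtain ⟨hx1, hxq⟩ := hnot
    have hxle : x ≤ q := by simp only [Finset.mem_range] at hx; omega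
    rcases Nat.even_or_odd x with hev | hod
    · -- x even, so q - x is odd and ≠ 1, hence ≥ 3
      have hqx : Odd (q - x) := by
        obtain ⟨a, ha⟩ := hev
        obtain ⟨b, hb⟩ := hq
        exact ⟨b - a, by omega⟩
      have hne : q - x ≠ 1 := by omega
      have : 1 < q - x := by
        rcases hqx with ⟨t, ht⟩; omega
      rw [bern_odd hqx this, mul_zero]
    · have : 1 < x := by
        rcases hod with ⟨t, ht⟩; omega
      rw [bern_odd hod this, mul_zero, zero_mul]
  have hpair : (1 : ℕ) ≠ q - 1 := by omega
  rw [S, ← Finset.sum_subset hsub hzero]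
  rw [Finset.sum_insert (by simp [hpair]), Finset.sum_singleton]
  have e1 : q - (q - 1) = 1 := by omega
  rw [e1, Nat.choose_one_right, bernoulli_one]
  have e2 : (q + 1).choose (q - 1) = (q + 1).choose 2 := by
    rw [show q - 1 = q + 1 - 2 by omega, Nat.choose_symm (by omega : 2 ≤ q + 1)]
  rw [e2, Nat.cast_choose_two]
  push_cast [Nat.cast_sub (by omega : 1 ≤ q)]
  ring

end Stmt5Aux

theorem stmt5 (m : ℕ) (hm : 0 < m) (hodd : Odd m) (hm3 : m ≠ 3) :
    2 / ((m : ℚ) + 1) *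
        ∑ r ∈ Finset.range (m + 1), ∑ l ∈ Finset.range (m - r + 1),
          (((m + 1).choose r : ℚ) * ((m + 1 - r).choose l : ℚ) / ((m : ℚ) + 1 - r)) *
            bernoulli r * bernoulli l * bernoulli (m - r - l)
      + 1 / ((m : ℚ) + 1) *
        ∑ r ∈ Finset.range m, ((m + 1).choose r : ℚ) * bernoulli r * bernoulli (m - 1 - r)
    = -(((m : ℚ) + 2) / (2 * m)) *
        ∑ r ∈ Finset.range m, (m.choose r : ℚ) * bernoulli r * bernoulli (m - 1 - r)
      + 1 / 4 * ∑ r ∈ Finset.range m, bernoulli r * bernoulli (m - 1 - r) := by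
  classical
  rcases eq_or_ne m 1 with rfl | hm1
  · norm_num [Finset.sum_range_succ, Finset.sum_range_zero, bernoulli_one, bernoulli_zero]
  have hm5 : 5 ≤ m := by rcases hodd with ⟨t, rfl⟩; omega
  have hBm : bernoulli m = 0 := Stmt5Aux.bern_odd hodd (by omega)
  have hBm2 : bernoulli (m - 2) = 0 := by
    refine Stmt5Aux.bern_odd ?_ (by omega)
    rcases hodd with ⟨t, rfl⟩
    exact ⟨t - 1, by omega⟩
  -- Step A: collapse inner sums to S
  have hinner : ∀ r ∈ Finset.range (m + 1),
      (∑ l ∈ Finset.range (m - r + 1),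
        (((m + 1).choose r : ℚ) * ((m + 1 - r).choose l : ℚ) / ((m : ℚ) + 1 - r)) *
          bernoulli r * bernoulli l * bernoulli (m - r - l))
      = ((m + 1).choose r : ℚ) * bernoulli r * S (m - r) / ((m : ℚ) + 1 - r) := by
    intro r hr
    have hrm : r ≤ m := by
      have := Finset.mem_range.mp hr; omega
    have hsub : m + 1 - r = m - r + 1 := by omega
    rw [hsub, S, Finset.mul_sum, Finset.sum_div]
    exact Finset.sum_congr rfl fun l _ => by ring
  rw [Finset.sum_congr rfl hinner]
  -- Step C: split off r = 1
  have h1mem : (1 : ℕ) ∈ Finset.range (m + 1) := by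
    simp only [Finset.mem_range]; omega
  rw [Finset.sum_eq_sum_sdiff_singleton_add h1mem]
  -- rewrite terms over the difference set
  have hdiff : ∀ r ∈ Finset.range (m + 1) \ {1},
      ((m + 1).choose r : ℚ) * bernoulli r * S (m - r) / ((m : ℚ) + 1 - r)
      = -(1/4) * ((((m : ℚ) - r + 2) * ((m + 1).choose r : ℚ)) * bernoulli r
          * bernoulli (m - 1 - r)) := by
    intro r hr
    rw [Finset.mem_sdiff, Finset.mem_singleton, Finset.mem_range] at hr
    obtain ⟨hrange, hne1⟩ := hr
    have hrm : r ≤ m := by omega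
    rcases Nat.even_or_odd r with hev | hod
    · have hmr : Odd (m - r) := by
        obtain ⟨a, ha⟩ := hev
        obtain ⟨b, hb⟩ := hodd
        exact ⟨b - a, by omega⟩
      rw [Stmt5Aux.S_odd hmr]
      have hc1 : ((m - r : ℕ) : ℚ) = (m : ℚ) - r := by
        rw [Nat.cast_sub hrm]
      have hind : m - r - 1 = m - 1 - r := by omega
      rw [hind, hc1]
      have hrq : (r : ℚ) ≤ m := by exact_mod_cast hrm
      have hM : (m : ℚ) + 1 - r ≠ 0 := by linarith
      field_simp
      ring
    · have h1r : 1 < r := by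
        rcases hod with ⟨t, ht⟩; omega
      rw [Stmt5Aux.bern_odd hod h1r]
      ring
  rw [Finset.sum_congr rfl hdiff]
  -- convert difference-set sum to sum over range m
  set g : ℕ → ℚ := fun r => -(1/4) * ((((m : ℚ) - r + 2) * ((m + 1).choose r : ℚ)) * bernoulli r
      * bernoulli (m - 1 - r)) with hg
  have hgsum : ∑ r ∈ Finset.range (m + 1) \ {1}, g r = ∑ r ∈ Finset.range m, g r := by
    have htot := Finset.sum_eq_sum_sdiff_singleton_add h1mem g
    have hg1 : g 1 = 0 := by
      have e : m - 1 - 1 = m - 2 := by omega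
      simp only [hg, e, hBm2]
      norm_num
    have hgm : g m = 0 := by
      simp only [hg, hBm]
      norm_num
    rw [Finset.sum_range_succ, hgm, add_zero] at htot
    rw [hg1, add_zero] at htot
    exact htot.symm
  rw [hgsum]
  -- S (m - 1) equals the A3 sum
  have hSm1 : S (m - 1) = ∑ r ∈ Finset.range m, (m.choose r : ℚ) * bernoulli r
      * bernoulli (m - 1 - r) := by
    rw [S, show m - 1 + 1 = m from by omega]
  -- per-term binomial identity for the g-sum
  have hterm : ∀ r ∈ Finset.range m,
      g r = -(1/4) * (((m : ℚ) + 1) * ((m.choose r : ℚ) * bernoulli r * bernoulli (m - 1 - r))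
        + ((m + 1).choose r : ℚ) * bernoulli r * bernoulli (m - 1 - r)) := by
    intro r hr
    have hrm : r ≤ m := le_of_lt (Finset.mem_range.mp hr)
    have hcast : ((m + 1).choose r : ℚ) * ((m : ℚ) + 1 - r)
        = ((m : ℚ) + 1) * (m.choose r : ℚ) := by
      have hc := Nat.choose_mul_succ_eq m r
      have hc2 : ((m.choose r : ℚ)) * ((m : ℚ) + 1)
          = ((m + 1).choose r : ℚ) * (((m + 1 - r : ℕ)) : ℚ) := by
        exact_mod_cast hc
      rw [Nat.cast_sub (by omega : r ≤ m + 1)] at hc2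
      push_cast at hc2
      linarith
    simp only [hg]
    linear_combination (-(1/4) * bernoulli r * bernoulli (m - 1 - r)) * hcast
  rw [Finset.sum_congr rfl hterm]
  -- Matiyasevich
  have hM := Stmt5Aux.matiyasevich (m - 2)
  rw [show m - 2 + 2 = m from by omega, show m - 2 + 3 = m + 1 from by omega,
    show m - 2 + 1 = m - 1 from by omega, hBm2, mul_zero, add_zero] at hM
  rw [Nat.cast_sub (by omega : 2 ≤ m)] at hM
  have hM' : 2 * ∑ r ∈ Finset.range m, ((m + 1).choose r : ℚ) * bernoulli r
      * bernoulli (m - 1 - r) = ((m : ℚ) + 1) * ∑ r ∈ Finset.range m, bernoulli r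
      * bernoulli (m - 1 - r) := by
    linear_combination (-1 : ℚ) * hM
  -- final algebra
  rw [hSm1]
  rw [← Finset.mul_sum, Finset.sum_add_distrib, ← Finset.mul_sum]
  rw [Nat.choose_one_right, bernoulli_one]
  push_cast
  have hm0 : (m : ℚ) ≠ 0 := by
    have : (0 : ℚ) < m := by exact_mod_cast hm
    linarith
  have hm1q : (m : ℚ) + 1 ≠ 0 := by
    have : (0 : ℚ) < m := by exact_mod_cast hm
    linarith
  have hden : (m : ℚ) + 1 - 1 = (m : ℚ) := by ring
  rw [hden]
  field_simp
  linear_combination (2 * (m : ℚ)) * hM'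
end

section
/- Let p be a prime and 0 < m < p−1 an even integer. Then ∑_{k=1}^{p-1} H_k²/k^m ≡ −∑_{j=0}^{p-1-m} B_j B_{p-1-m-j} − ∑_{j=p-m}^{p-2} B_j B_{2p-2-m-j} (mod p), as rationals with denominators coprime to p. -/
open Finset

namespace Stmt7Aux

variable {p : ℕ}

/-! ### p-integrality -/

/-- `q` is `p`-integral: `p` does not divide the denominator. -/
def pint (p : ℕ) (q : ℚ) : Prop := ¬ (p ∣ q.den)

lemma pint_intCast (hp : p.Prime) (n : ℤ) : pint p (n : ℚ) := by
  simp [pint, Rat.den_intCast, Nat.dvd_one, hp.ne_one]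

lemma pint_natCast (hp : p.Prime) (n : ℕ) : pint p (n : ℚ) := by
  simpa using pint_intCast hp (n : ℤ)

lemma pint_one (hp : p.Prime) : pint p (1 : ℚ) := by simpa using pint_natCast hp 1

lemma pint_add (hp : p.Prime) {q r : ℚ} (hq : pint p q) (hr : pint p r) : pint p (q + r) := by
  intro h
  rcases (Nat.Prime.dvd_mul hp).1 (h.trans (Rat.add_den_dvd q r)) with h' | h'
  exacts [hq h', hr h']

lemma pint_mul (hp : p.Prime) {q r : ℚ} (hq : pint p q) (hr : pint p r) : pint p (q * r) := by
  intro h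
  rcases (Nat.Prime.dvd_mul hp).1 (h.trans (Rat.mul_den_dvd q r)) with h' | h'
  exacts [hq h', hr h']

lemma pint_neg {q : ℚ} (hq : pint p q) : pint p (-q) := by
  simpa [pint] using hq

lemma pint_sub (hp : p.Prime) {q r : ℚ} (hq : pint p q) (hr : pint p r) : pint p (q - r) := by
  rw [sub_eq_add_neg]; exact pint_add hp hq (pint_neg hr)

lemma pint_sum (hp : p.Prime) {α : Type*} (s : Finset α) (f : α → ℚ)
    (h : ∀ a ∈ s, pint p (f a)) : pint p (∑ a ∈ s, f a) := by
  classical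
  induction s using Finset.induction_on with
  | empty => simpa using pint_intCast hp 0
  | insert _ _ hx ih =>
    rw [Finset.sum_insert hx]
    exact pint_add hp (h _ (Finset.mem_insert_self _ _))
      (ih fun a ha => h a (Finset.mem_insert_of_mem ha))

lemma pint_pow (hp : p.Prime) {q : ℚ} (hq : pint p q) (n : ℕ) : pint p (q ^ n) := by
  induction n with
  | zero => simpa using pint_one hp
  | succ n ih => rw [pow_succ]; exact pint_mul hp ih hq

lemma pint_inv_nat (hp : p.Prime) {j : ℕ} (hj : ¬ p ∣ j) : pint p ((j : ℚ)⁻¹) := by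
  intro h
  have h1 : ((j : ℚ)⁻¹) = Rat.divInt (1 : ℤ) (j : ℤ) := by
    rw [Rat.divInt_eq_div]; simp [one_div]
  have h2 : (((j : ℚ)⁻¹).den : ℤ) ∣ (j : ℤ) := by rw [h1]; exact Rat.den_dvd 1 (j : ℤ)
  exact hj (Int.ofNat_dvd.mp ((Int.ofNat_dvd.mpr h).trans h2))

/-! ### Casting p-integral rationals to `ZMod p` -/

section Cast
variable [Fact p.Prime]

lemma pint_den_ne {q : ℚ} (h : pint p q) : ((q.den : ZMod p)) ≠ 0 := by
  rw [Ne, ZMod.natCast_eq_zero_iff]; exact h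

lemma cast_add' {q r : ℚ} (hq : pint p q) (hr : pint p r) :
    ((q + r : ℚ) : ZMod p) = (q : ZMod p) + (r : ZMod p) :=
  Rat.cast_add_of_ne_zero (pint_den_ne hq) (pint_den_ne hr)

lemma cast_mul' {q r : ℚ} (hq : pint p q) (hr : pint p r) :
    ((q * r : ℚ) : ZMod p) = (q : ZMod p) * (r : ZMod p) :=
  Rat.cast_mul_of_ne_zero (pint_den_ne hq) (pint_den_ne hr)

lemma cast_sub' {q r : ℚ} (hq : pint p q) (hr : pint p r) :
    ((q - r : ℚ) : ZMod p) = (q : ZMod p) - (r : ZMod p) :=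
  Rat.cast_sub_of_ne_zero (pint_den_ne hq) (pint_den_ne hr)

lemma cast_sum' {α : Type*} (s : Finset α) (f : α → ℚ)
    (h : ∀ a ∈ s, pint p (f a)) :
    ((∑ a ∈ s, f a : ℚ) : ZMod p) = ∑ a ∈ s, ((f a : ℚ) : ZMod p) := by
  classical
  have hp : p.Prime := Fact.out
  induction s using Finset.induction_on with
  | empty => simp
  | insert _ _ hx ih =>
    rename_i a s' _
    rw [Finset.sum_insert hx, Finset.sum_insert hx,
      cast_add' (h _ (Finset.mem_insert_self _ _))
        (pint_sum hp _ _ fun b hb => h b (Finset.mem_insert_of_mem hb)),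
      ih (fun b hb => h b (Finset.mem_insert_of_mem hb))]

lemma cast_pow' {q : ℚ} (hq : pint p q) (n : ℕ) :
    ((q ^ n : ℚ) : ZMod p) = (q : ZMod p) ^ n := by
  have hp : p.Prime := Fact.out
  induction n with
  | zero => simp
  | succ n ih => rw [pow_succ, pow_succ, cast_mul' (pint_pow hp hq n) hq, ih]

lemma cast_inv_nat {j : ℕ} (hj : ¬ p ∣ j) :
    (((j : ℚ)⁻¹ : ℚ) : ZMod p) = ((j : ZMod p))⁻¹ := by
  have h1 : (((j : ℚ).num : ℤ) : ZMod p) ≠ 0 := by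
    rw [Rat.num_natCast]
    simpa [ZMod.natCast_eq_zero_iff] using hj
  rw [Rat.cast_inv_of_ne_zero h1, Rat.cast_natCast]

end Cast

/-! ### Sums of powers -/

lemma sum_range_zmod [NeZero p] {A : Type*} [AddCommMonoid A] (f : ZMod p → A) :
    ∑ k ∈ range p, f ((k : ZMod p)) = ∑ x : ZMod p, f x := by
  refine Finset.sum_nbij' (fun k => ((k : ZMod p))) (fun x => x.val) ?_ ?_ ?_ ?_ ?_
  · intro a _; exact Finset.mem_univ _
  · intro a _; exact Finset.mem_range.2 (ZMod.val_lt a)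
  · intro a ha; exact ZMod.val_cast_of_lt (Finset.mem_range.1 ha)
  · intro a _; exact ZMod.natCast_rightInverse a
  · intro a _; rfl

lemma sum_range_pow_nat_dvd [Fact p.Prime] {t : ℕ} (htp : t < p - 1) :
    p ∣ ∑ k ∈ range p, k ^ t := by
  rw [← ZMod.natCast_eq_zero_iff]
  push_cast
  rw [sum_range_zmod (fun x : ZMod p => x ^ t)]
  have h2 : t < Fintype.card (ZMod p) - 1 := by rwa [ZMod.card]
  exact FiniteField.sum_pow_lt_card_sub_one (ZMod p) t h2

lemma sum_univ_pow [Fact p.Prime] {t : ℕ} (ht : 0 < t) :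
    ∑ x : ZMod p, x ^ t = if (p - 1) ∣ t then -1 else 0 := by
  classical
  have h0 : ∑ x : ZMod p, x ^ t = ∑ x ∈ Finset.univ \ {(0 : ZMod p)}, x ^ t := by
    rw [← Finset.sum_sdiff (Finset.subset_univ {(0 : ZMod p)}), Finset.sum_singleton,
      zero_pow ht.ne', add_zero]
  have h1 : ∑ x ∈ Finset.univ \ {(0 : ZMod p)}, x ^ t = ∑ x : (ZMod p)ˣ, ((x : ZMod p)) ^ t := by
    refine Finset.sum_bij' (fun (x : ZMod p) (hx : x ∈ Finset.univ \ {(0 : ZMod p)}) =>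
        Units.mk0 x (by simpa using hx))
      (fun (u : (ZMod p)ˣ) _ => (u : ZMod p)) ?_ ?_ ?_ ?_ ?_
    · intro a _; exact Finset.mem_univ _
    · intro u _; simp [Units.ne_zero u]
    · intro a ha; simp
    · intro u _; simp
    · intro a ha; simp
  rw [h0, h1]
  have := FiniteField.sum_pow_units (ZMod p) t
  rw [ZMod.card] at this
  simpa using this

lemma sum_Icc_pow_K [Fact p.Prime] {t : ℕ} (ht : 0 < t) :
    ∑ k ∈ Icc 1 (p - 1), ((k : ZMod p)) ^ t = if (p - 1) ∣ t then -1 else 0 := by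
  have hp : p.Prime := Fact.out
  have hsplit : range p = insert 0 (Icc 1 (p - 1)) := by
    ext x
    simp only [Finset.mem_range, Finset.mem_insert, Finset.mem_Icc]
    have := hp.two_le
    omega
  have h0 : (0 : ℕ) ∉ Icc 1 (p - 1) := by simp
  have key : ∑ k ∈ range p, ((k : ZMod p)) ^ t
      = ∑ k ∈ Icc 1 (p - 1), ((k : ZMod p)) ^ t := by
    rw [hsplit, Finset.sum_insert h0]
    simp [zero_pow ht.ne']
  rw [← key, sum_range_zmod (fun x : ZMod p => x ^ t), sum_univ_pow ht]

/-! ### p-integrality of Bernoulli numbers below p - 1 -/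

lemma bernoulli_pint [Fact p.Prime] : ∀ t, t < p - 1 → pint p (bernoulli t) := by
  have hp : p.Prime := Fact.out
  intro t
  induction t using Nat.strong_induction_on with
  | _ t ih =>
    intro htp
    rcases Nat.eq_zero_or_pos t with rfl | ht
    · simpa [bernoulli_zero] using pint_one hp
    have hpt1 : ¬ p ∣ (t + 1) := by
      intro h
      have := Nat.le_of_dvd (Nat.succ_pos t) h
      omega
    obtain ⟨a, ha⟩ := sum_range_pow_nat_dvd (p := p) htp
    have key := _root_.sum_range_pow p t
    have hlast : bernoulli t * ((t + 1).choose t) * (p : ℚ) ^ (t + 1 - t) / (t + 1)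
        = bernoulli t * p := by
      rw [Nat.choose_succ_self_right, Nat.add_sub_cancel_left, pow_one]
      have h1 : ((t:ℚ) + 1) ≠ 0 := by positivity
      push_cast
      field_simp
    rw [Finset.sum_range_succ, hlast] at key
    have hA : (∑ k ∈ range p, (k : ℚ) ^ t) = (p : ℚ) * a := by
      have : (∑ k ∈ range p, (k : ℚ) ^ t) = ((∑ k ∈ range p, k ^ t : ℕ) : ℚ) := by push_cast; rfl
      rw [this, ha]; push_cast; ring
    rw [hA] at key
    have hS : (∑ i ∈ range t, bernoulli i * ((t + 1).choose i) * (p : ℚ) ^ (t + 1 - i) / (t + 1))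
        = (p : ℚ) * (∑ i ∈ range t,
            bernoulli i * ((t + 1).choose i) * (p : ℚ) ^ (t - i) / (t + 1)) := by
      rw [Finset.mul_sum]
      refine Finset.sum_congr rfl fun i hi => ?_
      have hle : i ≤ t := (Finset.mem_range.1 hi).le
      have h1 : t + 1 - i = (t - i) + 1 := by omega
      rw [h1, pow_succ]
      ring
    rw [hS] at key
    have hpq : (p : ℚ) ≠ 0 := by exact_mod_cast hp.ne_zero
    have hfin : bernoulli t = (a : ℚ) - ∑ i ∈ range t,
        bernoulli i * ((t + 1).choose i) * (p : ℚ) ^ (t - i) / (t + 1) := by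
      have := mul_left_cancel₀ hpq (by linarith [key] : (p:ℚ) * (a : ℚ)
        = (p:ℚ) * ((∑ i ∈ range t,
            bernoulli i * ((t + 1).choose i) * (p : ℚ) ^ (t - i) / (t + 1)) + bernoulli t))
      linarith [this]
    rw [hfin]
    refine pint_sub hp (pint_natCast hp a) (pint_sum hp _ _ fun i hi => ?_)
    have hi' : i < t := Finset.mem_range.1 hi
    rw [div_eq_mul_inv]
    refine pint_mul hp (pint_mul hp (pint_mul hp (ih i hi' (hi'.trans htp)) ?_) ?_) ?_
    · exact pint_natCast hp _
    · have : ((p : ℚ) ^ (t - i)) = ((p ^ (t - i) : ℕ) : ℚ) := by push_cast; ring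
      rw [this]; exact pint_natCast hp _
    · have : ((t : ℚ) + 1) = ((t + 1 : ℕ) : ℚ) := by push_cast; ring
      rw [this]; exact pint_inv_nat hp hpt1

lemma bernoulli'_pint [Fact p.Prime] {t : ℕ} (ht : t < p - 1) : pint p (bernoulli' t) := by
  have hp : p.Prime := Fact.out
  rw [bernoulli'_eq_bernoulli]
  have h1 : ((-1 : ℚ) ^ t) = (((-1 : ℤ) ^ t : ℤ) : ℚ) := by push_cast; ring
  rw [h1]
  exact pint_mul hp (pint_intCast hp _) (bernoulli_pint t ht)

/-! ### binomial coefficients mod p -/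

lemma choose_cast [Fact p.Prime] : ∀ i, i ≤ p - 1 →
    (((p - 1).choose i : ℕ) : ZMod p) = (-1) ^ i := by
  have hp : p.Prime := Fact.out
  have hp2 := hp.two_le
  intro i
  induction i with
  | zero => simp
  | succ i ih =>
    intro hi1
    have hi : i ≤ p - 1 := by omega
    have key := Nat.choose_succ_right_eq (p - 1) i
    have hcast : (((p - 1).choose (i + 1) * (i + 1) : ℕ) : ZMod p)
        = (((p - 1).choose i * (p - 1 - i) : ℕ) : ZMod p) := by rw [key]
    push_cast at hcast
    rw [ih hi] at hcast
    have hsub : ((p - 1 - i : ℕ) : ZMod p) = -((i : ZMod p) + 1) := by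
      have h1 : ((p - 1 - i : ℕ) : ZMod p) = ((p : ZMod p)) - 1 - (i : ZMod p) := by
        have e1 : (p - 1 - i) + (i + 1) = p := by omega
        have := congrArg (fun x : ℕ => ((x : ZMod p))) e1
        push_cast at this
        linear_combination this
      rw [h1, ZMod.natCast_self]
      ring
    rw [hsub] at hcast
    have hne : ((i : ZMod p) + 1) ≠ 0 := by
      have : (((i + 1 : ℕ)) : ZMod p) ≠ 0 := by
        rw [Ne, ZMod.natCast_eq_zero_iff]
        intro h
        have := Nat.le_of_dvd (Nat.succ_pos i) h
        omega
      push_cast at this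
      exact this
    have : (((p - 1).choose (i + 1) : ℕ) : ZMod p) * ((i : ZMod p) + 1)
        = ((-1) ^ (i + 1)) * ((i : ZMod p) + 1) := by
      rw [hcast]; ring
    exact mul_right_cancel₀ hne this

/-! ### Faulhaber mod p and the harmonic numbers -/

lemma bernoulli'_cast [Fact p.Prime] {i : ℕ} (hi : i < p - 1) :
    ((bernoulli' i : ℚ) : ZMod p) = (-1 : ZMod p) ^ i * ((bernoulli i : ℚ) : ZMod p) := by
  have hp : p.Prime := Fact.out
  have h1 : bernoulli' i = ((((-1 : ℤ) ^ i : ℤ)) : ℚ) * bernoulli i := by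
    rw [bernoulli'_eq_bernoulli]; push_cast; ring
  rw [h1, cast_mul' (pint_intCast hp _) (bernoulli_pint i hi), Rat.cast_intCast]
  push_cast
  ring

lemma faulhaber_K [Fact p.Prime] (hp2 : 2 < p) (k : ℕ) :
    (∑ j ∈ Icc 1 k, ((j : ZMod p)) ^ (p - 2))
      = -∑ i ∈ range (p - 1), ((bernoulli i : ℚ) : ZMod p) * (k : ZMod p) ^ (p - 1 - i) := by
  have hp : p.Prime := Fact.out
  have he : p - 2 + 1 = p - 1 := by omega
  have key := sum_Ico_pow k (p - 2)
  rw [he] at key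
  have hq : ((p - 2 : ℕ) : ℚ) + 1 = ((p - 1 : ℕ) : ℚ) := by
    have : ((p - 2) + 1 : ℕ) = (p - 1 : ℕ) := he
    exact_mod_cast congrArg (fun x : ℕ => (x : ℚ)) this
  rw [hq] at key
  -- p-integrality of each term on the RHS
  have hpm1 : ¬ p ∣ (p - 1) := by
    intro h
    have := Nat.le_of_dvd (by omega) h
    omega
  have hterm : ∀ i ∈ range (p - 1),
      pint p (bernoulli' i * ((p - 1).choose i : ℚ) * (k : ℚ) ^ (p - 1 - i)
        * (((p - 1 : ℕ) : ℚ))⁻¹) := by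
    intro i hi
    have hi' : i < p - 1 := Finset.mem_range.1 hi
    refine pint_mul hp (pint_mul hp (pint_mul hp (bernoulli'_pint hi') (pint_natCast hp _)) ?_)
      (pint_inv_nat hp hpm1)
    have : ((k : ℚ) ^ (p - 1 - i)) = ((k ^ (p - 1 - i) : ℕ) : ℚ) := by push_cast; ring
    rw [this]; exact pint_natCast hp _
  have hdiv : ∀ i, (bernoulli' i * ((p - 1).choose i : ℚ) * (k : ℚ) ^ (p - 1 - i)
        / (((p - 1 : ℕ)) : ℚ))
      = bernoulli' i * ((p - 1).choose i : ℚ) * (k : ℚ) ^ (p - 1 - i)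
        * (((p - 1 : ℕ) : ℚ))⁻¹ := fun i => by rw [div_eq_mul_inv]
  simp only [hdiv] at key
  -- cast of the LHS
  have hL : ((∑ j ∈ Ico 1 (k + 1), (j : ℚ) ^ (p - 2) : ℚ) : ZMod p)
      = ∑ j ∈ Icc 1 k, ((j : ZMod p)) ^ (p - 2) := by
    rw [cast_sum' _ _ (fun j _ => by
      have : ((j : ℚ) ^ (p - 2)) = ((j ^ (p - 2) : ℕ) : ℚ) := by push_cast; ring
      rw [this]; exact pint_natCast hp _)]
    rw [show Ico 1 (k + 1) = Icc 1 k from rfl]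
    refine Finset.sum_congr rfl fun j _ => ?_
    have h1 : ((j : ℚ) ^ (p - 2)) = ((j ^ (p - 2) : ℕ) : ℚ) := by push_cast; ring
    rw [h1, Rat.cast_natCast]
    push_cast
    ring
  -- cast of p - 1
  have hcastpm1 : (((p - 1 : ℕ)) : ZMod p) = -1 := by
    have e1 : (p - 1) + 1 = p := by omega
    have := congrArg (fun x : ℕ => ((x : ZMod p))) e1
    push_cast at this
    rw [ZMod.natCast_self] at this
    linear_combination this
  -- cast of the RHS
  have hR : ((∑ i ∈ range (p - 1), bernoulli' i * ((p - 1).choose i : ℚ)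
        * (k : ℚ) ^ (p - 1 - i) * (((p - 1 : ℕ) : ℚ))⁻¹ : ℚ) : ZMod p)
      = -∑ i ∈ range (p - 1), ((bernoulli i : ℚ) : ZMod p) * (k : ZMod p) ^ (p - 1 - i) := by
    rw [cast_sum' _ _ hterm, ← Finset.sum_neg_distrib]
    refine Finset.sum_congr rfl fun i hi => ?_
    have hi' : i < p - 1 := Finset.mem_range.1 hi
    have c1 : pint p (bernoulli' i) := bernoulli'_pint hi'
    have c2 : pint p (((p - 1).choose i : ℕ) : ℚ) := pint_natCast hp _
    have c3 : pint p ((k : ℚ) ^ (p - 1 - i)) := by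
      have : ((k : ℚ) ^ (p - 1 - i)) = ((k ^ (p - 1 - i) : ℕ) : ℚ) := by push_cast; ring
      rw [this]; exact pint_natCast hp _
    rw [cast_mul' (pint_mul hp (pint_mul hp c1 c2) c3) (pint_inv_nat hp hpm1),
      cast_mul' (pint_mul hp c1 c2) c3, cast_mul' c1 c2,
      cast_inv_nat hpm1, bernoulli'_cast hi', Rat.cast_natCast, choose_cast i hi'.le,
      hcastpm1]
    have hk : (((k : ℚ) ^ (p - 1 - i) : ℚ) : ZMod p) = (k : ZMod p) ^ (p - 1 - i) := by
      have h1 : ((k : ℚ) ^ (p - 1 - i)) = ((k ^ (p - 1 - i) : ℕ) : ℚ) := by push_cast; ring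
      rw [h1, Rat.cast_natCast]; push_cast; ring
    rw [hk]
    have hsq : ((-1 : ZMod p) ^ i) * ((-1 : ZMod p) ^ i) = 1 := by
      rw [← pow_add, ← two_mul, pow_mul]
      norm_num
    have hinv : (-1 : ZMod p)⁻¹ = -1 := by
      rw [inv_eq_of_mul_eq_one_left (by norm_num : (-1 : ZMod p) * (-1) = 1)]
    rw [hinv]
    calc (-1 : ZMod p) ^ i * ((bernoulli i : ℚ) : ZMod p) * (-1 : ZMod p) ^ i
          * (k : ZMod p) ^ (p - 1 - i) * (-1)
        = -(((-1 : ZMod p) ^ i * (-1 : ZMod p) ^ i) * (((bernoulli i : ℚ) : ZMod p)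
            * (k : ZMod p) ^ (p - 1 - i))) := by ring
      _ = -(((bernoulli i : ℚ) : ZMod p) * (k : ZMod p) ^ (p - 1 - i)) := by rw [hsq, one_mul]
  calc (∑ j ∈ Icc 1 k, ((j : ZMod p)) ^ (p - 2))
      = ((∑ j ∈ Ico 1 (k + 1), (j : ℚ) ^ (p - 2) : ℚ) : ZMod p) := hL.symm
    _ = ((∑ i ∈ range (p - 1), bernoulli' i * ((p - 1).choose i : ℚ)
          * (k : ℚ) ^ (p - 1 - i) * (((p - 1 : ℕ) : ℚ))⁻¹ : ℚ) : ZMod p) := by rw [key]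
    _ = -∑ i ∈ range (p - 1), ((bernoulli i : ℚ) : ZMod p) * (k : ZMod p) ^ (p - 1 - i) := hR

lemma H_pint (hp : p.Prime) {k : ℕ} (hk : k ≤ p - 1) : pint p (H k) := by
  refine pint_sum hp _ _ fun j hj => ?_
  obtain ⟨hj1, hj2⟩ := Finset.mem_Icc.1 hj
  have : (1 : ℚ) / j = ((j : ℚ))⁻¹ := one_div _
  rw [this]
  refine pint_inv_nat hp fun h => ?_
  have := Nat.le_of_dvd (by omega) h
  have := hp.two_le
  omega

lemma H_cast [Fact p.Prime] (hp2 : 2 < p) {k : ℕ} (hk : k ≤ p - 1) :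
    ((H k : ℚ) : ZMod p)
      = -∑ i ∈ range (p - 1), ((bernoulli i : ℚ) : ZMod p) * (k : ZMod p) ^ (p - 1 - i) := by
  have hp : p.Prime := Fact.out
  have hnd : ∀ j ∈ Icc 1 k, ¬ p ∣ j := by
    intro j hj h
    obtain ⟨hj1, hj2⟩ := Finset.mem_Icc.1 hj
    have := Nat.le_of_dvd (by omega) h
    omega
  rw [H, cast_sum' _ _ (fun j hj => by
    rw [one_div]; exact pint_inv_nat hp (hnd j hj))]
  rw [← faulhaber_K hp2 k]
  refine Finset.sum_congr rfl fun j hj => ?_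
  have hjn : ¬ p ∣ j := hnd j hj
  have hjK : ((j : ZMod p)) ≠ 0 := by
    rw [Ne, ZMod.natCast_eq_zero_iff]; exact hjn
  have h1 : (((1 : ℚ) / j : ℚ) : ZMod p) = ((j : ZMod p))⁻¹ := by
    rw [one_div, cast_inv_nat hjn]
  rw [h1]
  -- j⁻¹ = j ^ (p - 2)
  have h2 : ((j : ZMod p)) ^ (p - 2) * ((j : ZMod p)) = 1 := by
    have : ((j : ZMod p)) ^ (p - 2) * ((j : ZMod p)) = ((j : ZMod p)) ^ (p - 1) := by
      rw [← pow_succ]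
      congr 1
      omega
    rw [this, ZMod.pow_card_sub_one_eq_one hjK]
  exact (eq_inv_of_mul_eq_one_left h2).symm

end Stmt7Aux

open Stmt7Aux in
theorem stmt7 (p m : ℕ) (hp : p.Prime) (hm : 0 < m) (hmp : m < p - 1) (heven : Even m) :
    (p : ℤ) ∣ ((∑ k ∈ Finset.Icc 1 (p - 1), H k ^ 2 / (k : ℚ) ^ m)
      - (- ∑ j ∈ Finset.range (p - m), bernoulli j * bernoulli (p - 1 - m - j)
         - ∑ j ∈ Finset.Icc (p - m) (p - 2), bernoulli j * bernoulli (2 * p - 2 - m - j))).num := by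
  haveI : Fact p.Prime := ⟨hp⟩
  classical
  obtain ⟨M, hM⟩ := heven
  have hp2 : 2 ≤ p := hp.two_le
  have hm2 : 2 ≤ m := by omega
  have hp4 : 4 ≤ p := by omega
  have hpodd : ¬ (2 ∣ p) := by
    intro h
    rcases (Nat.Prime.eq_one_or_self_of_dvd hp 2 h) with h' | h' <;> omega
  set n := p - 1 - m with hn
  have hn2 : 2 ≤ n := by omega
  have hn3 : n ≤ p - 3 := by omega
  have hnm : n + m = p - 1 := by omega
  set K := ZMod p with hK
  set b : ℕ → K := fun i => ((bernoulli i : ℚ) : K) with hb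
  set L : ℚ := ∑ k ∈ Finset.Icc 1 (p - 1), H k ^ 2 / (k : ℚ) ^ m with hL
  set R : ℚ := - ∑ j ∈ Finset.range (p - m), bernoulli j * bernoulli (p - 1 - m - j)
         - ∑ j ∈ Finset.Icc (p - m) (p - 2), bernoulli j * bernoulli (2 * p - 2 - m - j) with hR
  -- basic facts about k in the summation range
  have hknd : ∀ k ∈ Finset.Icc 1 (p - 1), ¬ p ∣ k := by
    intro k hk h
    obtain ⟨h1, h2⟩ := Finset.mem_Icc.1 hk
    have := Nat.le_of_dvd (by omega) h
    omega
  have hkndm : ∀ k ∈ Finset.Icc 1 (p - 1), ¬ p ∣ k ^ m :=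
    fun k hk h => hknd k hk (hp.dvd_of_dvd_pow h)
  have hkK : ∀ k ∈ Finset.Icc 1 (p - 1), ((k : K)) ≠ 0 := by
    intro k hk
    rw [Ne, ZMod.natCast_eq_zero_iff]
    exact hknd k hk
  -- rewrite each term of L
  have hterm_eq : ∀ k ∈ Finset.Icc 1 (p - 1),
      H k ^ 2 / (k : ℚ) ^ m = H k ^ 2 * (((k ^ m : ℕ) : ℚ))⁻¹ := by
    intro k _
    rw [div_eq_mul_inv]
    push_cast
    ring
  have hLpint : pint p L := by
    refine pint_sum hp _ _ fun k hk => ?_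
    rw [hterm_eq k hk]
    exact pint_mul hp (pint_pow hp (H_pint hp (Finset.mem_Icc.1 hk).2) 2)
      (pint_inv_nat hp (hkndm k hk))
  -- p-integrality of R
  have hbpint : ∀ i, i < p - 1 → pint p (bernoulli i) := bernoulli_pint
  have hRpint : pint p R := by
    refine pint_sub hp (pint_neg (pint_sum hp _ _ fun j hj => ?_))
      (pint_sum hp _ _ fun j hj => ?_)
    · have hj' : j < p - m := Finset.mem_range.1 hj
      exact pint_mul hp (hbpint j (by omega)) (hbpint _ (by omega))
    · obtain ⟨hj1, hj2⟩ := Finset.mem_Icc.1 hj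
      exact pint_mul hp (hbpint j (by omega)) (hbpint _ (by omega))
  -- cast of L
  have hcastL : ((L : ℚ) : K) = ∑ k ∈ Finset.Icc 1 (p - 1),
      (∑ i ∈ Finset.range (p - 1), b i * (k : K) ^ (p - 1 - i))
        * (∑ i ∈ Finset.range (p - 1), b i * (k : K) ^ (p - 1 - i)) * (k : K) ^ n := by
    rw [hL, Finset.sum_congr rfl hterm_eq,
      cast_sum' _ _ (fun k hk => pint_mul hp (pint_pow hp (H_pint hp (Finset.mem_Icc.1 hk).2) 2)
        (pint_inv_nat hp (hkndm k hk)))]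
    refine Finset.sum_congr rfl fun k hk => ?_
    obtain ⟨hk1, hk2⟩ := Finset.mem_Icc.1 hk
    rw [cast_mul' (pint_pow hp (H_pint hp hk2) 2) (pint_inv_nat hp (hkndm k hk)),
      cast_pow' (H_pint hp hk2) 2, cast_inv_nat (hkndm k hk), H_cast (by omega) hk2]
    have hpow : (((k ^ m : ℕ)) : K) = ((k : K)) ^ m := by push_cast; ring
    rw [hpow]
    have hinv : (((k : K)) ^ m)⁻¹ = ((k : K)) ^ n := by
      refine inv_eq_of_mul_eq_one_right ?_
      rw [← pow_add]
      have : m + n = p - 1 := by omega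
      rw [this, ZMod.pow_card_sub_one_eq_one (hkK k hk)]
    rw [hinv]
    ring
  -- expand the square and swap sums
  have hE : ∀ i ∈ Finset.range (p - 1), ∀ i' ∈ Finset.range (p - 1),
      0 < (p - 1 - i) + (p - 1 - i') + n := by
    intro i hi i' hi'
    have := Finset.mem_range.1 hi
    omega
  have hdvd_iff : ∀ i ∈ Finset.range (p - 1), ∀ i' ∈ Finset.range (p - 1),
      ((p - 1) ∣ ((p - 1 - i) + (p - 1 - i') + n) ↔ (i + i' = n ∨ i + i' = n + (p - 1))) := by
    intro i hi i' hi'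
    have hi1 : i < p - 1 := Finset.mem_range.1 hi
    have hi1' : i' < p - 1 := Finset.mem_range.1 hi'
    constructor
    · rintro ⟨c, hc⟩
      have hub : (p - 1) * c < (p - 1) * 3 := by omega
      have hc3 : c < 3 := Nat.lt_of_mul_lt_mul_left hub
      have hc0 : c ≠ 0 := by
        rintro rfl
        omega
      interval_cases c <;> omega
    · rintro (h | h)
      · exact ⟨2, by omega⟩
      · exact ⟨1, by omega⟩
  have hcastL2 : ((L : ℚ) : K) = ∑ i ∈ Finset.range (p - 1), ∑ i' ∈ Finset.range (p - 1),
      b i * b i' * (if i + i' = n ∨ i + i' = n + (p - 1) then (-1 : K) else 0) := by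
    rw [hcastL]
    have step1 : ∀ k ∈ Finset.Icc 1 (p - 1),
        (∑ i ∈ Finset.range (p - 1), b i * (k : K) ^ (p - 1 - i))
          * (∑ i ∈ Finset.range (p - 1), b i * (k : K) ^ (p - 1 - i)) * (k : K) ^ n
        = ∑ i ∈ Finset.range (p - 1), ∑ i' ∈ Finset.range (p - 1),
            b i * b i' * (k : K) ^ ((p - 1 - i) + (p - 1 - i') + n) := by
      intro k _
      rw [Finset.sum_mul_sum, Finset.sum_mul]
      refine Finset.sum_congr rfl fun i _ => ?_
      rw [Finset.sum_mul]
      refine Finset.sum_congr rfl fun i' _ => ?_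
      rw [pow_add, pow_add]
      ring
    rw [Finset.sum_congr rfl step1, Finset.sum_comm]
    refine Finset.sum_congr rfl fun i hi => ?_
    rw [Finset.sum_comm]
    refine Finset.sum_congr rfl fun i' hi' => ?_
    rw [← Finset.mul_sum, sum_Icc_pow_K (hE i hi i' hi'),
      if_congr (hdvd_iff i hi i' hi') rfl rfl]
  -- split the disjunction
  have hsplit : ((L : ℚ) : K)
      = (∑ i ∈ Finset.range (p - 1), ∑ i' ∈ Finset.range (p - 1),
          b i * b i' * (if i + i' = n then (-1 : K) else 0))
      + (∑ i ∈ Finset.range (p - 1), ∑ i' ∈ Finset.range (p - 1),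
          b i * b i' * (if i + i' = n + (p - 1) then (-1 : K) else 0)) := by
    rw [hcastL2, ← Finset.sum_add_distrib]
    refine Finset.sum_congr rfl fun i _ => ?_
    rw [← Finset.sum_add_distrib]
    refine Finset.sum_congr rfl fun i' _ => ?_
    by_cases h1 : i + i' = n
    · have h2 : ¬ (i + i' = n + (p - 1)) := by omega
      rw [if_pos (Or.inl h1), if_pos h1, if_neg h2, mul_zero, add_zero]
    · by_cases h2 : i + i' = n + (p - 1)
      · rw [if_pos (Or.inr h2), if_pos h2, if_neg h1, mul_zero, zero_add]
      · rw [if_neg (by tauto), if_neg h1, if_neg h2, mul_zero, add_zero]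
  -- evaluate the two diagonal sums
  have hA : (∑ i ∈ Finset.range (p - 1), ∑ i' ∈ Finset.range (p - 1),
        b i * b i' * (if i + i' = n then (-1 : K) else 0))
      = -∑ i ∈ Finset.range (n + 1), b i * b (n - i) := by
    have inner : ∀ i ∈ Finset.range (p - 1),
        (∑ i' ∈ Finset.range (p - 1), b i * b i' * (if i + i' = n then (-1 : K) else 0))
        = (if i ≤ n then -(b i * b (n - i)) else 0) := by
      intro i hi
      by_cases hin : i ≤ n
      · rw [if_pos hin]
        rw [Finset.sum_eq_single (n - i)]
        · rw [if_pos (by omega)]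
          ring
        · intro i' _ hne
          rw [if_neg (by omega), mul_zero]
        · intro habs
          exact absurd (Finset.mem_range.2 (by omega)) habs
      · rw [if_neg hin]
        refine Finset.sum_eq_zero fun i' _ => ?_
        rw [if_neg (by omega), mul_zero]
    rw [Finset.sum_congr rfl inner, ← Finset.sum_filter]
    have hfil : Finset.filter (fun i => i ≤ n) (Finset.range (p - 1))
        = Finset.range (n + 1) := by
      ext x
      simp only [Finset.mem_filter, Finset.mem_range]
      omega
    rw [hfil, ← Finset.sum_neg_distrib]
  have hB : (∑ i ∈ Finset.range (p - 1), ∑ i' ∈ Finset.range (p - 1),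
        b i * b i' * (if i + i' = n + (p - 1) then (-1 : K) else 0))
      = -∑ i ∈ Finset.Icc (n + 1) (p - 2), b i * b (n + (p - 1) - i) := by
    have inner : ∀ i ∈ Finset.range (p - 1),
        (∑ i' ∈ Finset.range (p - 1), b i * b i' * (if i + i' = n + (p - 1) then (-1 : K) else 0))
        = (if n + 1 ≤ i then -(b i * b (n + (p - 1) - i)) else 0) := by
      intro i hi
      have hi1 : i < p - 1 := Finset.mem_range.1 hi
      by_cases hin : n + 1 ≤ i
      · rw [if_pos hin]
        rw [Finset.sum_eq_single (n + (p - 1) - i)]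
        · rw [if_pos (by omega)]
          ring
        · intro i' _ hne
          rw [if_neg (by omega), mul_zero]
        · intro habs
          exact absurd (Finset.mem_range.2 (by omega)) habs
      · rw [if_neg hin]
        refine Finset.sum_eq_zero fun i' hi' => ?_
        have := Finset.mem_range.1 hi'
        rw [if_neg (by omega), mul_zero]
    rw [Finset.sum_congr rfl inner, ← Finset.sum_filter]
    have hfil : Finset.filter (fun i => n + 1 ≤ i) (Finset.range (p - 1))
        = Finset.Icc (n + 1) (p - 2) := by
      ext x
      simp only [Finset.mem_filter, Finset.mem_range, Finset.mem_Icc]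
      omega
    rw [hfil, ← Finset.sum_neg_distrib]
  -- cast of R
  have hcastR : ((R : ℚ) : K)
      = (-∑ i ∈ Finset.range (n + 1), b i * b (n - i))
      + (-∑ i ∈ Finset.Icc (n + 1) (p - 2), b i * b (n + (p - 1) - i)) := by
    rw [hR, sub_eq_add_neg,
      cast_add' (pint_neg (pint_sum hp _ _ fun j hj => pint_mul hp
        (hbpint j (by have := Finset.mem_range.1 hj; omega))
        (hbpint _ (by have := Finset.mem_range.1 hj; omega))))
        (pint_neg (pint_sum hp _ _ fun j hj => pint_mul hp
          (hbpint j (by have := (Finset.mem_Icc.1 hj).2; omega))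
          (hbpint _ (by have := (Finset.mem_Icc.1 hj).1; have := (Finset.mem_Icc.1 hj).2; omega)))),
      Rat.cast_neg, Rat.cast_neg]
    congr 1
    · rw [cast_sum' _ _ (fun j hj => pint_mul hp
        (hbpint j (by have := Finset.mem_range.1 hj; omega))
        (hbpint _ (by have := Finset.mem_range.1 hj; omega)))]
      have hpm : p - m = n + 1 := by omega
      rw [hpm]
      refine congrArg Neg.neg (Finset.sum_congr rfl fun j hj => ?_)
      have hj' : j < n + 1 := by
        have := Finset.mem_range.1 hj
        omega
      rw [cast_mul' (hbpint j (by omega)) (hbpint _ (by omega))]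
    · rw [cast_sum' _ _ (fun j hj => pint_mul hp
        (hbpint j (by have := (Finset.mem_Icc.1 hj).2; omega))
        (hbpint _ (by have := (Finset.mem_Icc.1 hj).1; have := (Finset.mem_Icc.1 hj).2; omega)))]
      have hpm : p - m = n + 1 := by omega
      rw [hpm]
      refine congrArg Neg.neg (Finset.sum_congr rfl fun j hj => ?_)
      obtain ⟨hj1, hj2⟩ := Finset.mem_Icc.1 hj
      have hidx : 2 * p - 2 - m - j = n + (p - 1) - j := by omega
      rw [hidx, cast_mul' (hbpint j (by omega)) (hbpint _ (by omega))]
  -- conclude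
  have hD0 : (((L - R : ℚ)) : K) = 0 := by
    rw [cast_sub' hLpint hRpint, hsplit, hA, hB, hcastR]
    ring
  have hDpint : pint p (L - R) := pint_sub hp hLpint hRpint
  have hden : (((L - R).den : K)) ≠ 0 := pint_den_ne hDpint
  rw [Rat.cast_def] at hD0
  have hnum : (((L - R).num : ℤ) : K) = 0 := by
    exact (div_eq_zero_iff.1 hD0).resolve_right hden
  exact_mod_cast (ZMod.intCast_zmod_eq_zero_iff_dvd _ p).1 hnum
end

section
/- Let p > 3 be a prime and 0 < m < p−1 an integer. Then ∑_{k=1}^{p-1} k^m H_k ≡ B_m − (p/(m+1)) S(m) (mod p²), where S(m) = ∑_{r=0}^m C(m+1,r) B_r B_{m-r}. -/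
open Finset

section VFrame
variable (p : ℕ) [hp : Fact p.Prime]

def V (k : ℕ) (q : ℚ) : Prop := ‖((q : ℚ_[p]))‖ ≤ (p : ℝ) ^ (-(k : ℤ))

variable {p}

lemma V_zero (k : ℕ) : V p k 0 := by
  simp only [V, Rat.cast_zero, norm_zero]
  positivity

lemma V_mono {j k : ℕ} (h : j ≤ k) {q : ℚ} (hq : V p k q) : V p j q := by
  refine hq.trans (zpow_le_zpow_right₀ ?_ ?_)
  · exact_mod_cast hp.1.one_lt.le
  · omega

lemma V_add {k : ℕ} {a b : ℚ} (ha : V p k a) (hb : V p k b) : V p k (a + b) := by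
  unfold V at *
  push_cast
  exact (Padic.nonarchimedean _ _).trans (max_le ha hb)

lemma V_neg {k : ℕ} {a : ℚ} (ha : V p k a) : V p k (-a) := by
  unfold V at *
  push_cast
  rwa [norm_neg]

lemma V_sub {k : ℕ} {a b : ℚ} (ha : V p k a) (hb : V p k b) : V p k (a - b) := by
  rw [sub_eq_add_neg]; exact V_add ha (V_neg hb)

lemma V_mul {j k : ℕ} {a b : ℚ} (ha : V p j a) (hb : V p k b) : V p (j + k) (a * b) := by
  unfold V at *
  push_cast
  rw [norm_mul]
  calc ‖(a : ℚ_[p])‖ * ‖(b : ℚ_[p])‖ ≤ (p : ℝ) ^ (-(j:ℤ)) * (p : ℝ) ^ (-(k:ℤ)) := by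
        exact mul_le_mul ha hb (norm_nonneg _) (by positivity)
    _ = (p : ℝ) ^ (-((j+k : ℕ) :ℤ)) := by
        rw [← zpow_add₀ (by exact_mod_cast hp.1.pos.ne')]
        push_cast; ring_nf

lemma V_sum {k : ℕ} {α : Type*} {s : Finset α} {f : α → ℚ}
    (h : ∀ i ∈ s, V p k (f i)) : V p k (∑ i ∈ s, f i) := by
  classical
  induction s using Finset.induction_on with
  | empty => simpa using V_zero k
  | insert x s hx ih =>
      rw [Finset.sum_insert hx]
      exact V_add (h _ (mem_insert_self _ _)) (ih fun i hi => h i (mem_insert_of_mem hi))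

lemma V_int (n : ℤ) : V p 0 (n : ℚ) := by
  unfold V
  simpa using Padic.norm_int_le_one (p := p) n

lemma V_nat (n : ℕ) : V p 0 (n : ℚ) := by exact_mod_cast V_int (n : ℤ)

lemma V_one : V p 0 1 := by exact_mod_cast V_nat 1

lemma V_p : V p 1 (p : ℚ) := by
  unfold V
  push_cast
  rw [Padic.norm_p]
  simp [zpow_neg]

lemma norm_nat_eq_one {j : ℕ} (h0 : ¬ (p ∣ j)) : ‖((j : ℕ) : ℚ_[p])‖ = 1 := by
  have h1 : ‖((j : ℤ) : ℚ_[p])‖ ≤ 1 := Padic.norm_int_le_one _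
  have h2 : ¬ ‖((j : ℤ) : ℚ_[p])‖ < 1 := by
    rw [Padic.norm_intCast_lt_one_iff]
    exact_mod_cast h0
  push_cast at *
  linarith [lt_or_eq_of_le h1]

lemma V_inv_nat {j : ℕ} (h0 : ¬ (p ∣ j)) : V p 0 ((j : ℚ)⁻¹) := by
  unfold V
  push_cast
  rw [norm_inv, norm_nat_eq_one h0]
  simp

lemma V_div_nat {k : ℕ} {a : ℚ} (ha : V p k a) {j : ℕ} (h0 : ¬ (p ∣ j)) :
    V p k (a / j) := by
  have := V_mul ha (V_inv_nat h0)
  simpa [div_eq_mul_inv] using this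

end VFrame

section Bern
variable {p : ℕ} [hp : Fact p.Prime]

lemma not_dvd_of_lt {p j : ℕ} (h0 : 0 < j) (h : j < p) : ¬ p ∣ j :=
  fun hd => absurd (Nat.le_of_dvd h0 hd) (by omega)

lemma V_p_pow (k : ℕ) : V p k ((p : ℚ) ^ k) := by
  unfold V
  push_cast
  rw [norm_pow, Padic.norm_p, inv_pow, ← zpow_natCast, ← zpow_neg]

lemma V_bernoulli : ∀ i, i < p - 1 → V p 0 (bernoulli i) := by
  intro i
  induction i using Nat.strong_induction_on with
  | _ i ih =>
    intro hi
    rcases Nat.eq_zero_or_pos i with h0 | h0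
    · subst h0; simpa using (V_one : V p 0 1)
    · have hs := sum_bernoulli (i + 1)
      rw [if_neg (by omega), Finset.sum_range_succ] at hs
      have hch : (((i+1).choose i : ℕ) : ℚ) = ((i : ℚ) + 1) := by
        rw [Nat.choose_succ_self_right]; push_cast; ring
      rw [hch] at hs
      have hne : ((i : ℚ) + 1) ≠ 0 := by positivity
      have hB : bernoulli i
          = (- ∑ k ∈ Finset.range i, (((i+1).choose k : ℕ) : ℚ) * bernoulli k) / ((i+1 : ℕ) : ℚ) := by
        rw [eq_div_iff (by push_cast; positivity)]
        push_cast
        linarith [hs]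
      rw [hB]
      refine V_div_nat (V_neg (V_sum ?_)) (not_dvd_of_lt (by omega) (by omega))
      intro k hk
      simp only [Finset.mem_range] at hk
      simpa using V_mul (V_nat ((i+1).choose k)) (ih k (by omega) (by omega))

def Q (p r : ℕ) : ℚ := ∑ j ∈ Icc 1 (p-1), (j : ℚ) ^ r

lemma Q_eq_range (hp1 : 1 ≤ p) {r : ℕ} (hr : 1 ≤ r) :
    Q p r = ∑ j ∈ Finset.range p, (j : ℚ) ^ r := by
  unfold Q
  rw [Finset.range_eq_Ico, Finset.sum_eq_sum_Ico_succ_bot (by omega)]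
  have : Icc 1 (p-1) = Ico 1 p := by
    rw [← Finset.Ico_add_one_right_eq_Icc]
    congr 1
    omega
  rw [this]
  simp [zero_pow (by omega : r ≠ 0)]

lemma V_key {r : ℕ} (h1 : 1 ≤ r) (h2 : r ≤ p - 2) :
    V p 2 (Q p r - (p : ℚ) * bernoulli r) := by
  have hp2 : 2 ≤ p := hp.1.two_le
  rw [Q_eq_range (by omega) h1, sum_range_pow p r, Finset.sum_range_succ]
  have htop : bernoulli r * (((r+1).choose r : ℕ) : ℚ) * (p:ℚ) ^ (r + 1 - r) / ((r:ℚ) + 1)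
      = (p : ℚ) * bernoulli r := by
    rw [Nat.choose_succ_self_right]
    have : r + 1 - r = 1 := by omega
    rw [this]
    push_cast
    field_simp
  rw [htop, add_sub_cancel_right]
  refine V_sum ?_
  intro i hi
  simp only [Finset.mem_range] at hi
  have hterm : bernoulli i * (((r+1).choose i : ℕ) : ℚ) * (p:ℚ) ^ (r + 1 - i) / ((r:ℚ) + 1)
      = (bernoulli i * (((r+1).choose i : ℕ) : ℚ) * (p:ℚ) ^ (r + 1 - i)) / ((r+1 : ℕ) : ℚ) := by
    push_cast; ring
  rw [hterm]
  have hV : V p (0 + 0 + (r + 1 - i)) (bernoulli i * (((r+1).choose i : ℕ) : ℚ) * (p:ℚ) ^ (r + 1 - i)) :=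
    V_mul (V_mul (V_bernoulli i (by omega)) (V_nat _)) (V_p_pow _)
  exact V_mono (by omega) (V_div_nat hV (not_dvd_of_lt (by omega) (by omega)))

end Bern

section Wolst
variable {p : ℕ} [hp : Fact p.Prime]

lemma V_fermat {j : ℕ} (h0 : ¬ p ∣ j) : V p 1 (1 - (j:ℚ)^(p-1)) := by
  have hz : (j : ZMod p) ≠ 0 := by
    rwa [Ne, ZMod.natCast_eq_zero_iff]
  have hf : (j : ZMod p)^(p-1) = 1 := ZMod.pow_card_sub_one_eq_one hz
  have hd : (p:ℤ) ∣ (1 - (j:ℤ)^(p-1)) := by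
    rw [← ZMod.intCast_zmod_eq_zero_iff_dvd]
    push_cast
    rw [hf]
    ring
  have h2 := (Padic.norm_int_le_pow_iff_dvd (p := p) (1 - (j:ℤ)^(p-1)) 1).mpr
    (by simpa using hd)
  unfold V
  push_cast at h2 ⊢
  exact h2

lemma wolstenholme (hp3 : 3 < p) : V p 2 (H (p-1)) := by
  have hp5 : 5 ≤ p := by
    by_contra hcon
    have h4 : p = 4 := by omega
    exact absurd (h4 ▸ hp.1) (by decide)
  -- basic facts for j in the interval
  have facts : ∀ j ∈ Icc 1 (p-1), 1 ≤ j ∧ j ≤ p - 1 ∧ ((p - j : ℕ) : ℚ) = (p:ℚ) - (j:ℚ)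
      ∧ (j:ℚ) ≠ 0 ∧ (p:ℚ) - (j:ℚ) ≠ 0 ∧ ¬ p ∣ j := by
    intro j hj
    obtain ⟨hj1, hj2⟩ := Finset.mem_Icc.mp hj
    have hjlt : j < p := by omega
    have hc : ((p - j : ℕ) : ℚ) = (p:ℚ) - (j:ℚ) := by
      push_cast [Nat.cast_sub hjlt.le]; ring
    refine ⟨hj1, hj2, hc, Nat.cast_ne_zero.mpr (by omega), ?_, not_dvd_of_lt (by omega) hjlt⟩
    rw [← hc]
    exact_mod_cast (Nat.cast_ne_zero (R := ℚ)).mpr (by omega)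
  set n := p - 1 with hn
  set W : ℚ := ∑ j ∈ Icc 1 n, 1/((j:ℚ) * ((p:ℚ) - j)) with hWdef
  set A : ℚ := ∑ j ∈ Icc 1 n, 1/(j:ℚ)^2 with hAdef
  set Bq : ℚ := ∑ j ∈ Icc 1 n, 1/((j:ℚ)^2 * ((p:ℚ) - j)) with hBqdef
  set E : ℚ := ∑ j ∈ Icc 1 n, (1 - (j:ℚ)^(p-1))/(j:ℚ)^2 with hEdef
  -- reflection
  have hrefl : ∑ j ∈ Icc 1 n, (1:ℚ)/((p - j : ℕ):ℚ) = ∑ j ∈ Icc 1 n, (1:ℚ)/(j:ℚ) := by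
    refine Finset.sum_nbij' (fun j => p - j) (fun j => p - j) ?_ ?_ ?_ ?_ ?_
    · intro a ha; obtain ⟨h1, h2, _⟩ := facts a ha; simp only [Finset.mem_Icc]; omega
    · intro a ha; obtain ⟨h1, h2, _⟩ := facts a ha; simp only [Finset.mem_Icc]; omega
    · intro a ha; obtain ⟨h1, h2, _⟩ := facts a ha; show p - (p - a) = a; omega
    · intro a ha; obtain ⟨h1, h2, _⟩ := facts a ha; show p - (p - a) = a; omega
    · intro a ha; rfl
  -- 2 H = p W
  have h2H : H n + H n = (p:ℚ) * W := by
    unfold H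
    rw [hWdef, Finset.mul_sum]
    nth_rewrite 1 [← hrefl]
    rw [← Finset.sum_add_distrib]
    refine Finset.sum_congr rfl ?_
    intro j hj
    obtain ⟨h1, h2, hc, hj0, hpj0, hnd⟩ := facts j hj
    rw [hc, div_add_div _ _ hpj0 hj0, mul_one_div,
      div_eq_div_iff (mul_ne_zero hpj0 hj0) (mul_ne_zero hj0 hpj0)]
    ring
  -- W = -A + p Bq
  have hsplit : W = -A + (p:ℚ) * Bq := by
    rw [hAdef, hBqdef, ← Finset.sum_neg_distrib, Finset.mul_sum, ← Finset.sum_add_distrib]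
    refine Finset.sum_congr rfl ?_
    intro j hj
    obtain ⟨h1, h2, hc, hj0, hpj0, hnd⟩ := facts j hj
    field_simp
    ring
  -- A = Q p (p-3) + E
  have hAE : A = Q p (p-3) + E := by
    rw [hAdef, hEdef, Q, ← Finset.sum_add_distrib]
    refine Finset.sum_congr rfl ?_
    intro j hj
    obtain ⟨h1, h2, hc, hj0, hpj0, hnd⟩ := facts j hj
    have hpow : (j:ℚ)^(p-3) * (j:ℚ)^2 = (j:ℚ)^(p-1) := by
      rw [← pow_add]; congr 1; omega
    rw [sub_div]
    have hd : (j:ℚ)^(p-1)/(j:ℚ)^2 = (j:ℚ)^(p-3) := by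
      rw [div_eq_mul_inv, ← pow_sub₀ _ hj0 (by omega : 2 ≤ p - 1),
        (by omega : p - 1 - 2 = p - 3)]
    rw [hd]
    ring
  -- bounds
  have hE : V p 1 E := by
    refine V_sum ?_
    intro j hj
    obtain ⟨h1, h2, hc, hj0, hpj0, hnd⟩ := facts j hj
    have hcast : (j:ℚ)^2 = ((j^2 : ℕ) : ℚ) := by push_cast; ring
    rw [div_eq_mul_inv, hcast, ← div_eq_mul_inv]
    exact V_div_nat (V_fermat hnd) (fun hd => hnd (hp.1.dvd_of_dvd_pow hd))
  have hQ : V p 1 (Q p (p-3)) := by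
    have hk := V_key (p := p) (r := p - 3) (by omega) (by omega)
    have hb : V p 1 ((p:ℚ) * bernoulli (p-3)) := by
      simpa using V_mul (V_p (p := p)) (V_bernoulli (p-3) (by omega))
    have := V_add (V_mono (by omega) hk) hb
    simpa using this
  have hA : V p 1 A := by rw [hAE]; exact V_add hQ hE
  have hBq : V p 0 Bq := by
    refine V_sum ?_
    intro j hj
    obtain ⟨h1, h2, hc, hj0, hpj0, hnd⟩ := facts j hj
    have hcast : (j:ℚ)^2 * ((p:ℚ) - j) = ((j^2 * (p - j) : ℕ) : ℚ) := by
      push_cast [Nat.cast_sub (by omega : j ≤ p)]; ring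
    rw [hcast, one_div]
    refine V_inv_nat ?_
    intro hd
    rcases (hp.1.dvd_mul.mp hd) with h | h
    · exact hnd (hp.1.dvd_of_dvd_pow h)
    · exact absurd (Nat.le_of_dvd (by omega) h) (by omega)
  have hW : V p 1 W := by
    rw [hsplit]
    exact V_add (V_neg hA) (by simpa using V_mul (V_p (p := p)) hBq)
  have hH : H n = ((p:ℚ) * W) / 2 := by linarith
  rw [hH]
  have h2 : ¬ p ∣ 2 := fun hd => absurd (Nat.le_of_dvd (by omega) hd) (by omega)
  have hcast2 : (2:ℚ) = ((2:ℕ):ℚ) := by norm_num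
  rw [hcast2]
  exact V_div_nat (by simpa using V_mul (V_p (p := p)) hW) h2

end Wolst

section Main

lemma identA {p m : ℕ} (hp1 : 1 ≤ p) (hm : 0 < m) :
    ∑ k ∈ Icc 1 (p-1), (k:ℚ)^m * H k
      = H (p-1) * Q p m
        - ∑ i ∈ range (m+1),
            bernoulli i * ((m+1).choose i : ℚ) * Q p (m - i) / ((m:ℚ)+1) := by
  have hIp : Icc 1 (p-1) = Ico 1 p := by
    rw [← Finset.Ico_add_one_right_eq_Icc]; congr 1; omega
  have step : ∑ k ∈ Icc 1 (p-1), (k:ℚ)^m * H k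
      = ∑ j ∈ Ico 1 p, (1/(j:ℚ)) * (Q p m - ∑ k ∈ Finset.range j, (k:ℚ)^m) := by
    calc ∑ k ∈ Icc 1 (p-1), (k:ℚ)^m * H k
        = ∑ k ∈ Ico 1 p, ∑ j ∈ Ico 1 (k+1), (k:ℚ)^m * (1/j) := by
          rw [hIp]
          refine Finset.sum_congr rfl ?_
          intro k hk
          rw [H, Finset.mul_sum, ← Finset.Ico_add_one_right_eq_Icc]
      _ = ∑ j ∈ Ico 1 p, ∑ k ∈ Ico j p, (k:ℚ)^m * (1/j) :=
          (sum_Ico_Ico_comm 1 p (fun j k => (k:ℚ)^m * (1/j))).symm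
      _ = ∑ j ∈ Ico 1 p, (1/(j:ℚ)) * ∑ k ∈ Ico j p, (k:ℚ)^m := by
          refine Finset.sum_congr rfl ?_
          intro j hj
          rw [Finset.mul_sum]
          exact Finset.sum_congr rfl (fun k hk => by ring)
      _ = ∑ j ∈ Ico 1 p, (1/(j:ℚ)) * (Q p m - ∑ k ∈ Finset.range j, (k:ℚ)^m) := by
          refine Finset.sum_congr rfl ?_
          intro j hj
          obtain ⟨hj1, hj2⟩ := Finset.mem_Ico.mp hj
          congr 1
          have hsplit := Finset.sum_Ico_consecutive (fun k => (k:ℚ)^m)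
            (by omega : 1 ≤ j) (by omega : j ≤ p)
          have hr : ∑ k ∈ Ico 1 j, (k:ℚ)^m = ∑ k ∈ Finset.range j, (k:ℚ)^m := by
            rw [Finset.range_eq_Ico, Finset.sum_eq_sum_Ico_succ_bot (by omega : 0 < j)]
            simp [zero_pow hm.ne']
          rw [Q, hIp]
          linarith [hsplit, hr]
  rw [step]
  have step2 : ∀ j ∈ Ico 1 p,
      (1/(j:ℚ)) * (Q p m - ∑ k ∈ Finset.range j, (k:ℚ)^m)
        = (1/(j:ℚ)) * Q p m
          - ∑ i ∈ range (m+1), bernoulli i * ((m+1).choose i : ℚ) * (j:ℚ)^(m-i) / ((m:ℚ)+1) := by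
    intro j hj
    obtain ⟨hj1, hj2⟩ := Finset.mem_Ico.mp hj
    have hj0 : (j:ℚ) ≠ 0 := Nat.cast_ne_zero.mpr (by omega)
    rw [sum_range_pow j m, mul_sub]
    congr 1
    rw [Finset.mul_sum]
    refine Finset.sum_congr rfl ?_
    intro i hi
    have him := Finset.mem_range.mp hi
    have hpow : (j:ℚ)^(m+1-i) = (j:ℚ)^(m-i) * j := by
      rw [← pow_succ]; congr 1; omega
    rw [hpow]
    field_simp
  rw [Finset.sum_congr rfl step2, Finset.sum_sub_distrib]
  congr 1
  · rw [← Finset.sum_mul, H, hIp]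
  · rw [Finset.sum_comm]
    refine Finset.sum_congr rfl ?_
    intro i hi
    rw [Q, hIp, ← Finset.sum_div, ← Finset.mul_sum]

end Main

theorem stmt8 (p m : ℕ) (hp : p.Prime) (hp3 : 3 < p) (hm : 0 < m) (hmp : m < p - 1) :
    (p : ℤ) ^ 2 ∣ ((∑ k ∈ Finset.Icc 1 (p - 1), (k : ℚ) ^ m * H k)
      - (bernoulli m - (p : ℚ) / (m + 1) * S m)).num := by
  haveI : Fact p.Prime := ⟨hp⟩
  have hp5 : 5 ≤ p := by
    by_contra hcon
    have h4 : p = 4 := by omega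
    exact absurd (h4 ▸ hp) (by decide)
  have hm1 : ((m:ℚ)+1) ≠ 0 := by positivity
  have hQ0 : Q p 0 = (p:ℚ) - 1 := by
    unfold Q
    simp only [pow_zero, Finset.sum_const, Nat.card_Icc, nsmul_eq_mul, mul_one]
    have he : p - 1 + 1 - 1 = p - 1 := by omega
    rw [he, Nat.cast_sub (by omega : 1 ≤ p)]
    norm_num
  have hC : (((m+1).choose m : ℕ) : ℚ) = (m:ℚ)+1 := by
    rw [Nat.choose_succ_self_right]; push_cast; ring
  have hident := identA (p := p) (m := m) (by omega) hm
  set A1 := ∑ i ∈ range m, bernoulli i * ((m+1).choose i : ℚ) * Q p (m-i) / ((m:ℚ)+1) with hA1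
  set A2 := ∑ i ∈ range m, ((m+1).choose i : ℚ) * bernoulli i * bernoulli (m-i) with hA2
  set A3 := ∑ i ∈ range m,
    bernoulli i * ((m+1).choose i : ℚ) * (Q p (m-i) - (p:ℚ) * bernoulli (m-i)) / ((m:ℚ)+1)
    with hA3
  have hA3eq : A3 = A1 - (p:ℚ) * A2 / ((m:ℚ)+1) := by
    rw [hA1, hA2, hA3, Finset.mul_sum, Finset.sum_div, ← Finset.sum_sub_distrib]
    exact Finset.sum_congr rfl (fun i hi => by ring)
  have hSsplit : S m = A2 + ((m:ℚ)+1) * bernoulli m := by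
    rw [S, Finset.sum_range_succ, hA2, Nat.sub_self, bernoulli_zero, hC]
    ring
  have hSig : ∑ i ∈ range (m+1), bernoulli i * ((m+1).choose i : ℚ) * Q p (m-i) / ((m:ℚ)+1)
      = A1 + bernoulli m * ((p:ℚ) - 1) := by
    rw [Finset.sum_range_succ, hA1]
    congr 1
    rw [Nat.sub_self, hQ0, hC]
    field_simp
  have hD : (∑ k ∈ Icc 1 (p-1), (k:ℚ)^m * H k) - (bernoulli m - (p:ℚ)/((m:ℚ)+1) * S m)
      = H (p-1) * Q p m - A3 := by
    rw [hident, hSig, hA3eq, hSsplit]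
    field_simp
    ring
  have hQm : V p 0 (Q p m) := by
    refine V_sum ?_
    intro j hj
    have hc : ((j:ℚ))^m = ((j^m : ℕ):ℚ) := by push_cast; ring
    rw [hc]
    exact V_nat _
  have hV : V p 2 ((∑ k ∈ Icc 1 (p-1), (k:ℚ)^m * H k)
      - (bernoulli m - (p:ℚ)/((m:ℚ)+1) * S m)) := by
    rw [hD]
    refine V_sub ?_ ?_
    · simpa using V_mul (wolstenholme hp3) hQm
    · rw [hA3]
      refine V_sum ?_
      intro i hi
      have him := Finset.mem_range.mp hi
      have hden : ((m:ℚ)+1) = ((m+1 : ℕ):ℚ) := by push_cast; ring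
      rw [hden]
      refine V_div_nat ?_ (not_dvd_of_lt (by omega) (by omega))
      have := V_mul (V_mul (V_bernoulli i (by omega)) (V_nat ((m+1).choose i)))
        (V_key (p := p) (r := m-i) (by omega) (by omega))
      simpa using this
  set D : ℚ := (∑ k ∈ Icc 1 (p-1), (k:ℚ)^m * H k)
      - (bernoulli m - (p:ℚ)/((m:ℚ)+1) * S m) with hDdef
  have hnum : V p 2 ((D.num : ℚ)) := by
    have hden0 : ((D.den : ℚ)) ≠ 0 := Nat.cast_ne_zero.mpr D.den_nz
    have hq : ((D.num:ℚ)) = D * (D.den : ℚ) :=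
      (div_eq_iff hden0).mp (Rat.num_div_den D)
    rw [hq]
    simpa using V_mul hV (V_nat D.den)
  unfold V at hnum
  have hfin := (Padic.norm_int_le_pow_iff_dvd (p := p) D.num 2).mp (by push_cast at hnum ⊢; exact hnum)
  exact_mod_cast hfin
end

section
/- For every prime p > 3, ∑_{k=1}^{p-1} k³ H_k² ≡ −(59/144) p + 1/6 (mod p²), as rationals with denominators coprime to p. -/
open Finset

lemma H_succ (n : ℕ) : H (n + 1) = H n + 1 / (n + 1) := by
  unfold H
  rw [Finset.sum_Icc_succ_top (by omega)]
  push_cast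
  ring

lemma key_ident (n : ℕ) :
    ∑ k ∈ Finset.Icc 1 n, (k : ℚ) ^ 3 * H k ^ 2
      = (9 * (n:ℚ) ^ 4 - 14 * n ^ 3 + 15 * n ^ 2 - 10 * n) / 288
        - (3 * (n:ℚ) ^ 4 - 2 * n ^ 3 - 3 * n ^ 2 + 2 * n) / 24 * H n
        + (n:ℚ) ^ 2 * ((n:ℚ) + 1) ^ 2 / 4 * H n ^ 2 := by
  induction n with
  | zero => simp [H]
  | succ n ih =>
    rw [Finset.sum_Icc_succ_top (by omega), ih, H_succ]
    have h : ((n : ℚ) + 1) ≠ 0 := by positivity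
    push_cast
    field_simp
    ring

/-- `q` is `p`-integral: `q = a / b` with `p ∤ b`. -/
def PGood (p : ℕ) (q : ℚ) : Prop := ∃ a b : ℤ, ¬ (p : ℤ) ∣ b ∧ q * b = a

lemma PGood.zero (p : ℕ) (hp : p.Prime) : PGood p 0 :=
  ⟨0, 1, fun h => hp.one_lt.ne' (by exact_mod_cast Int.eq_one_of_dvd_one (by norm_num) h), by simp⟩

lemma PGood.add {p : ℕ} (hp : p.Prime) {q r : ℚ} (hq : PGood p q) (hr : PGood p r) :
    PGood p (q + r) := by
  obtain ⟨a, b, hb, hab⟩ := hq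
  obtain ⟨c, d, hd, hcd⟩ := hr
  refine ⟨a * d + c * b, b * d, ?_, ?_⟩
  · intro h
    rcases (Nat.prime_iff_prime_int.mp hp).dvd_mul.mp h with h | h
    · exact hb h
    · exact hd h
  · push_cast
    linear_combination (d : ℚ) * hab + (b : ℚ) * hcd

lemma PGood.mul {p : ℕ} (hp : p.Prime) {q r : ℚ} (hq : PGood p q) (hr : PGood p r) :
    PGood p (q * r) := by
  obtain ⟨a, b, hb, hab⟩ := hq
  obtain ⟨c, d, hd, hcd⟩ := hr
  refine ⟨a * c, b * d, ?_, ?_⟩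
  · intro h
    rcases (Nat.prime_iff_prime_int.mp hp).dvd_mul.mp h with h | h
    · exact hb h
    · exact hd h
  · push_cast
    linear_combination (r * (d : ℚ)) * hab + (a : ℚ) * hcd

lemma PGood.div_int {p : ℕ} (a b : ℤ) (hb : ¬ (p : ℤ) ∣ b) :
    PGood p ((a : ℚ) / (b : ℚ)) := by
  have hb0 : b ≠ 0 := by rintro rfl; exact hb (dvd_zero _)
  have hb0' : (b : ℚ) ≠ 0 := Int.cast_ne_zero.mpr hb0
  exact ⟨a, b, hb, by field_simp⟩

theorem stmt10 (p : ℕ) (hp : p.Prime) (hp3 : 3 < p) :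
    (p : ℤ) ^ 2 ∣ ((∑ k ∈ Finset.Icc 1 (p - 1), (k : ℚ) ^ 3 * H k ^ 2)
      - (-(59 / 144) * (p : ℚ) + 1 / 6)).num := by
  have hp1 : 1 ≤ p := hp.one_le
  have hpc : ((p - 1 : ℕ) : ℚ) = (p : ℚ) - 1 := by
    push_cast [Nat.cast_sub hp1]; ring
  -- the paired sum
  set G : ℚ := ∑ j ∈ Finset.Icc 1 (p - 1), (1 : ℚ) / ((j : ℚ) * ((p : ℚ) - j)) with hG
  -- reflection: sum of 1/(p-j) equals sum of 1/j
  have hrefl : ∑ j ∈ Finset.Icc 1 (p - 1), (1 : ℚ) / j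
      = ∑ j ∈ Finset.Icc 1 (p - 1), (1 : ℚ) / ((p : ℚ) - j) := by
    apply Finset.sum_nbij' (fun j => p - j) (fun j => p - j)
    · intro a ha; simp only [Finset.mem_Icc] at *; omega
    · intro a ha; simp only [Finset.mem_Icc] at *; omega
    · intro a ha; simp only [Finset.mem_Icc] at *; omega
    · intro a ha; simp only [Finset.mem_Icc] at *; omega
    · intro a ha
      simp only [Finset.mem_Icc] at ha
      have h1 : ((p - a : ℕ) : ℚ) = (p : ℚ) - a := by
        push_cast [Nat.cast_sub (by omega : a ≤ p)]; ring
      rw [h1]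
      congr 1
      have : (p : ℚ) - ((p : ℚ) - a) = a := by ring
      rw [this]
  have h2H : 2 * H (p - 1) = (p : ℚ) * G := by
    have : 2 * H (p - 1) = ∑ j ∈ Finset.Icc 1 (p - 1),
        ((1 : ℚ) / j + (1 : ℚ) / ((p : ℚ) - j)) := by
      rw [Finset.sum_add_distrib, ← hrefl, H]; ring
    rw [this, hG, Finset.mul_sum]
    apply Finset.sum_congr rfl
    intro j hj
    simp only [Finset.mem_Icc] at hj
    have hj0 : (j : ℚ) ≠ 0 := Nat.cast_ne_zero.mpr (by omega)
    have hjp : (j : ℚ) < p := by exact_mod_cast (by omega : j < p)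
    have hpj : (p : ℚ) - j ≠ 0 := by linarith
    field_simp
    ring
  -- G is p-integral
  have hGg : PGood p G := by
    rw [hG]
    apply Finset.sum_induction _ _ (fun a b => PGood.add hp) (PGood.zero p hp)
    intro j hj
    simp only [Finset.mem_Icc] at hj
    have hterm : (1 : ℚ) / ((j : ℚ) * ((p : ℚ) - j))
        = ((1 : ℤ) : ℚ) / (((j * (p - j) : ℕ) : ℤ) : ℚ) := by
      push_cast [Nat.cast_sub (by omega : j ≤ p)]
      ring_nf
    rw [hterm]
    apply PGood.div_int
    rw [Int.natCast_dvd_natCast]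
    intro h
    rcases (Nat.Prime.dvd_mul hp).mp h with h | h
    · exact absurd (Nat.le_of_dvd (by omega) h) (by omega)
    · exact absurd (Nat.le_of_dvd (by omega) h) (by omega)
  -- p does not divide small constants
  have hpne2 : p ≠ 2 := by omega
  have hpne3 : p ≠ 3 := by omega
  have hnotdvd : ∀ m k : ℕ, ¬ (p : ℤ) ∣ ((2 : ℤ) ^ m * 3 ^ k) := by
    intro m k h
    rcases (Nat.prime_iff_prime_int.mp hp).dvd_mul.mp h with h | h
    · have := (Nat.prime_iff_prime_int.mp hp).dvd_of_dvd_pow h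
      have : (p : ℤ) ∣ 2 := this
      have hle := Int.le_of_dvd (by norm_num) this
      omega
    · have := (Nat.prime_iff_prime_int.mp hp).dvd_of_dvd_pow h
      have hle := Int.le_of_dvd (by norm_num) this
      omega
  -- Y, the p-integral cofactor
  set Y : ℚ := ((9 * (p:ℚ)^2 - 50 * p + 111) / 288)
      + (-(((p:ℚ) - 1) * ((p:ℚ) - 2) * (3 * (p:ℚ) - 5)) / 48) * G
      + (((p:ℚ)^2 * ((p:ℚ) - 1)^2) / 16) * (G * G) with hY
  have hYg : PGood p Y := by
    apply PGood.add hp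
    apply PGood.add hp
    · have : ((9 * (p:ℚ)^2 - 50 * p + 111) / 288)
          = (((9 * (p:ℤ)^2 - 50 * p + 111) : ℤ) : ℚ) / (((2:ℤ)^5 * 3^2 : ℤ) : ℚ) := by
        push_cast; norm_num
      rw [this]; exact PGood.div_int _ _ (hnotdvd 5 2)
    · apply PGood.mul hp _ hGg
      have : (-(((p:ℚ) - 1) * ((p:ℚ) - 2) * (3 * (p:ℚ) - 5)) / 48)
          = (((-(((p:ℤ) - 1) * ((p:ℤ) - 2) * (3 * (p:ℤ) - 5))) : ℤ) : ℚ)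
            / (((2:ℤ)^4 * 3^1 : ℤ) : ℚ) := by
        push_cast; norm_num
      rw [this]; exact PGood.div_int _ _ (hnotdvd 4 1)
    · apply PGood.mul hp _ (PGood.mul hp hGg hGg)
      have : (((p:ℚ)^2 * ((p:ℚ) - 1)^2) / 16)
          = ((((p:ℤ)^2 * ((p:ℤ) - 1)^2) : ℤ) : ℚ) / (((2:ℤ)^4 * 3^0 : ℤ) : ℚ) := by
        push_cast; norm_num
      rw [this]; exact PGood.div_int _ _ (hnotdvd 4 0)
  -- the key algebraic identity D = p^2 * Y
  set D : ℚ := (∑ k ∈ Finset.Icc 1 (p - 1), (k : ℚ) ^ 3 * H k ^ 2)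
      - (-(59 / 144) * (p : ℚ) + 1 / 6) with hD
  have hDY : D = (p : ℚ) ^ 2 * Y := by
    have hHval : H (p - 1) = (p : ℚ) * G / 2 := by linarith [h2H]
    rw [hD, key_ident (p - 1), hHval, hY, hpc]
    ring
  -- conclude divisibility of the numerator
  obtain ⟨a, b, hb, hab⟩ := hYg
  have hnum : (D.num : ℚ) * b = (p : ℚ) ^ 2 * a * D.den := by
    have h1 : (D.num : ℚ) = D * D.den := (by exact_mod_cast (Rat.mul_den_eq_num D).symm)
    rw [h1]
    linear_combination ((D.den : ℚ) * (b:ℚ)) * hDY + ((p:ℚ)^2 * (D.den:ℚ)) * hab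
  have hnumz : D.num * b = (p : ℤ) ^ 2 * a * D.den := by exact_mod_cast hnum
  have hdvd : (p : ℤ) ^ 2 ∣ D.num * b := ⟨a * D.den, by linarith [hnumz]⟩
  have hcop : IsCoprime ((p : ℤ) ^ 2) b :=
    (((Nat.prime_iff_prime_int.mp hp).coprime_iff_not_dvd).mpr hb).pow_left
  exact hcop.dvd_of_dvd_mul_right hdvd
end

section
/- Let p > 3 be a prime and 0 < m < p−1 an odd integer. Then ∑_{k=1}^{p-1} H_k²/k^m ≡ B_{p-2-m} (mod p), as rationals with denominators coprime to p. -/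
open Finset

set_option linter.unusedSectionVars false
set_option maxHeartbeats 1600000

namespace Stmt16Aux



variable {p : ℕ}

/-- `q` is `p`-integral. -/
def G (p : ℕ) (q : ℚ) : Prop := ¬ p ∣ q.den

lemma G_iff [NeZero p] (q : ℚ) : G p q ↔ ((q.den : ZMod p) ≠ 0) := by
  rw [Ne, ZMod.natCast_eq_zero_iff, G]

lemma G_of_dvd {q : ℚ} {n : ℕ} (hd : q.den ∣ n) (hn : ¬ p ∣ n) : G p q :=
  fun h => hn (h.trans hd)

variable [hp : Fact p.Prime]

lemma G_natCast (n : ℕ) : G p (n : ℚ) := by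
  simp [G, Rat.den_natCast, Nat.dvd_one, hp.out.ne_one]

lemma G_one : G p (1 : ℚ) := by simpa using G_natCast 1

lemma G_zero : G p (0 : ℚ) := by simpa using G_natCast 0

lemma G_add {q r : ℚ} (hq : G p q) (hr : G p r) : G p (q + r) := fun h =>
  ((Nat.Prime.dvd_mul hp.out).mp (h.trans (Rat.add_den_dvd q r))).elim hq hr

lemma G_mul {q r : ℚ} (hq : G p q) (hr : G p r) : G p (q * r) := fun h =>
  ((Nat.Prime.dvd_mul hp.out).mp (h.trans (Rat.mul_den_dvd q r))).elim hq hr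

lemma G_neg {q : ℚ} (hq : G p q) : G p (-q) := by
  simpa [G, Rat.den_neg_eq_den] using hq

lemma G_pow {q : ℚ} (n : ℕ) (hq : G p q) : G p (q ^ n) := by
  induction n with
  | zero => simpa [pow_zero] using G_one
  | succ k ih => rw [pow_succ]; exact G_mul ih hq

lemma G_sum {ι : Type*} {s : Finset ι} {f : ι → ℚ} (h : ∀ i ∈ s, G p (f i)) :
    G p (∑ i ∈ s, f i) := by
  classical
  induction s using Finset.induction_on with
  | empty => simpa using G_zero
  | insert _ _ hx ih =>
    rw [Finset.sum_insert hx]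
    exact G_add (h _ (Finset.mem_insert_self _ _))
      (ih fun i hi => h i (Finset.mem_insert_of_mem hi))

lemma den_one_div_dvd (n : ℕ) : (1 / (n : ℚ)).den ∣ n := by
  have h := Rat.den_dvd (1 : ℤ) (n : ℤ)
  rw [Rat.divInt_eq_div] at h
  have : ((1 : ℤ) : ℚ) / ((n : ℤ) : ℚ) = 1 / (n : ℚ) := by push_cast; ring
  rw [this] at h
  exact_mod_cast h

lemma G_one_div (n : ℕ) (hn : ¬ p ∣ n) : G p (1 / (n : ℚ)) :=
  G_of_dvd (den_one_div_dvd n) hn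

lemma castK_add {q r : ℚ} (hq : G p q) (hr : G p r) :
    ((q + r : ℚ) : ZMod p) = (q : ZMod p) + (r : ZMod p) :=
  Rat.cast_add_of_ne_zero ((G_iff q).mp hq) ((G_iff r).mp hr)

lemma castK_mul {q r : ℚ} (hq : G p q) (hr : G p r) :
    ((q * r : ℚ) : ZMod p) = (q : ZMod p) * (r : ZMod p) :=
  Rat.cast_mul_of_ne_zero ((G_iff q).mp hq) ((G_iff r).mp hr)

lemma castK_sub {q r : ℚ} (hq : G p q) (hr : G p r) :
    ((q - r : ℚ) : ZMod p) = (q : ZMod p) - (r : ZMod p) :=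
  Rat.cast_sub_of_ne_zero ((G_iff q).mp hq) ((G_iff r).mp hr)

lemma castK_pow {q : ℚ} (n : ℕ) (hq : G p q) :
    ((q ^ n : ℚ) : ZMod p) = (q : ZMod p) ^ n := by
  induction n with
  | zero => simp
  | succ k ih => rw [pow_succ, castK_mul (G_pow k hq) hq, ih, pow_succ]

lemma castK_sum {ι : Type*} {s : Finset ι} {f : ι → ℚ} (h : ∀ i ∈ s, G p (f i)) :
    ((∑ i ∈ s, f i : ℚ) : ZMod p) = ∑ i ∈ s, ((f i : ℚ) : ZMod p) := by
  classical
  induction s using Finset.induction_on with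
  | empty => simp
  | insert _ _ hx ih =>
    rename_i a s
    rw [Finset.sum_insert hx, Finset.sum_insert hx,
      castK_add (h _ (Finset.mem_insert_self _ _)) (G_sum fun i hi => h i (Finset.mem_insert_of_mem hi)),
      ih fun i hi => h i (Finset.mem_insert_of_mem hi)]



-- placeholders (already proven): 

lemma not_dvd_of_le {n : ℕ} (h0 : 0 < n) (h : n < p) : ¬ p ∣ n :=
  fun hd => absurd (Nat.le_of_dvd h0 hd) (not_le.mpr h)

lemma G_bernoulli : ∀ n, n < p - 1 → G p (bernoulli n) := by
  intro n
  induction n using Nat.strong_induction_on with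
  | _ n ih =>
    intro hn
    rcases Nat.eq_zero_or_pos n with rfl | hn0
    · simpa [bernoulli_zero] using G_natCast 1
    · have hs := sum_bernoulli (n + 1)
      rw [if_neg (by omega), Finset.sum_range_succ, Nat.choose_succ_self_right] at hs
      have hb : bernoulli n =
          (-(∑ k ∈ Finset.range n, ((n + 1).choose k : ℚ) * bernoulli k)) * (1 / ((n+1 : ℕ) : ℚ)) := by
        have hne : ((n : ℚ) + 1) ≠ 0 := by positivity
        field_simp
        push_cast at hs ⊢
        linarith [hs]
      rw [hb]
      refine G_mul (G_neg (G_sum fun k hk => G_mul (G_natCast _) ?_))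
        (G_one_div (n+1) (not_dvd_of_le (by omega) (by have := hp.out.two_le; omega)))
      have hkn := Finset.mem_range.mp hk
      exact ih k hkn (by omega)



lemma knz {k : ℕ} (h1 : 1 ≤ k) (h2 : k ≤ p - 1) : ((k : ZMod p)) ≠ 0 := by
  rw [Ne, ZMod.natCast_eq_zero_iff]
  have := hp.out.two_le
  exact fun hd => absurd (Nat.le_of_dvd h1 hd) (by omega)

lemma inv_pow_eq {x : ZMod p} (hx : x ≠ 0) (s : ℕ) :
    (x ^ s)⁻¹ = x ^ (s * (p - 2)) := by
  have h2 := hp.out.two_le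
  have key : x ^ s * x ^ (s * (p - 2)) = 1 := by
    rw [← pow_add]
    have : s + s * (p - 2) = (p - 1) * s := by
      have : p - 1 = (p - 2) + 1 := by omega
      rw [this]; ring
    rw [this, pow_mul, ZMod.pow_card_sub_one_eq_one hx, one_pow]
  exact inv_eq_of_mul_eq_one_right key

/-- Power sum over `1..p-1` in `ZMod p`. -/
lemma powsum (e : ℕ) :
    (∑ k ∈ Finset.Icc 1 (p - 1), ((k : ZMod p)) ^ e) =
      if (p - 1) ∣ e then (-1 : ZMod p) else 0 := by
  have h2 := hp.out.two_le
  have hbij : ∑ k ∈ Finset.Icc 1 (p - 1), ((k : ZMod p)) ^ e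
      = ∑ x ∈ Finset.univ.filter (fun x : ZMod p => x ≠ 0), x ^ e := by
    refine Finset.sum_nbij' (fun k => (k : ZMod p)) (fun x => x.val) ?_ ?_ ?_ ?_ ?_
    · intro k hk
      simp only [Finset.mem_Icc] at hk
      simp [knz hk.1 hk.2]
    · intro x hx
      simp only [Finset.mem_filter, Finset.mem_univ, true_and] at hx
      have h1 : 0 < x.val := ZMod.val_pos.mpr hx
      have h3 : x.val < p := ZMod.val_lt x
      simp only [Finset.mem_Icc]; omega
    · intro k hk
      simp only [Finset.mem_Icc] at hk
      exact ZMod.val_cast_of_lt (by omega)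
    · intro x _; exact ZMod.natCast_zmod_val x
    · intro k _; rfl
  rw [hbij]
  by_cases hdvd : (p - 1) ∣ e
  · rw [if_pos hdvd]
    obtain ⟨c, rfl⟩ := hdvd
    have : ∀ x ∈ Finset.univ.filter (fun x : ZMod p => x ≠ 0), x ^ ((p-1)*c) = 1 := by
      intro x hx
      simp only [Finset.mem_filter, Finset.mem_univ, true_and] at hx
      rw [pow_mul, ZMod.pow_card_sub_one_eq_one hx, one_pow]
    rw [Finset.sum_congr rfl this, Finset.sum_const, nsmul_eq_mul, mul_one]
    have hcard : (Finset.univ.filter (fun x : ZMod p => x ≠ 0)).card = p - 1 := by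
      rw [Finset.filter_ne']
      rw [Finset.card_erase_of_mem (Finset.mem_univ 0), Finset.card_univ, ZMod.card]
    rw [hcard]
    have : ((p - 1 : ℕ) : ZMod p) = -1 := by
      push_cast [Nat.cast_sub (by omega : 1 ≤ p)]
      simp [ZMod.natCast_self]
    rw [this]
  · rw [if_neg hdvd]
    set r := e % (p - 1) with hr
    have hrlt : r < p - 1 := Nat.mod_lt _ (by omega)
    have hrpos : 0 < r := by
      rcases Nat.eq_zero_or_pos r with h0 | h
      · have h0' : e % (p - 1) = 0 := by omega
        exact absurd (Nat.dvd_of_mod_eq_zero h0') hdvd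
      · exact h
    have hxe : ∀ x ∈ Finset.univ.filter (fun x : ZMod p => x ≠ 0), x ^ e = x ^ r := by
      intro x hx
      simp only [Finset.mem_filter, Finset.mem_univ, true_and] at hx
      conv_lhs => rw [← Nat.div_add_mod e (p - 1)]
      rw [pow_add, pow_mul, ZMod.pow_card_sub_one_eq_one hx, one_pow, one_mul]
    rw [Finset.sum_congr rfl hxe]
    have hall : ∑ x ∈ Finset.univ.filter (fun x : ZMod p => x ≠ 0), x ^ r
        = ∑ x : ZMod p, x ^ r := by
      rw [Finset.filter_ne']
      exact Finset.sum_erase _ (by simp [zero_pow hrpos.ne'])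
    rw [hall]
    exact FiniteField.sum_pow_lt_card_sub_one (ZMod p) r (by simpa [ZMod.card] using hrlt)




lemma choose_cast : ∀ r, r ≤ p - 1 → (((p-1).choose r : ℕ) : ZMod p) = (-1 : ZMod p)^r := by
  have h2 := hp.out.two_le
  intro r
  induction r with
  | zero => simp
  | succ n ih =>
    intro hn
    have hch : p.choose (n+1) = (p-1).choose n + (p-1).choose (n+1) := by
      have hpe : p = (p - 1) + 1 := by omega
      conv_lhs => rw [hpe]
      rw [Nat.choose_succ_succ]
    have hdvd : (p : ℕ) ∣ p.choose (n+1) :=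
      hp.out.dvd_choose_self (by omega) (by omega)
    have hzero : ((p.choose (n+1) : ℕ) : ZMod p) = 0 := by
      rw [ZMod.natCast_eq_zero_iff]; exact hdvd
    have : (((p-1).choose n : ℕ) : ZMod p) + (((p-1).choose (n+1) : ℕ) : ZMod p) = 0 := by
      rw [← Nat.cast_add, ← hch, hzero]
    rw [ih (by omega)] at this
    rw [pow_succ]
    linear_combination this

def A (p : ℕ) (k : ℕ) : ZMod p := ∑ j ∈ Finset.Icc 1 k, ((j : ZMod p))⁻¹

lemma A_succ (k : ℕ) : A p (k + 1) = A p k + (((k+1 : ℕ) : ZMod p))⁻¹ := by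
  rw [A, A, Finset.sum_Icc_succ_top (by omega)]

lemma inv_eq_pow {k : ℕ} (h1 : 1 ≤ k) (h2 : k ≤ p - 1) :
    ((k : ZMod p))⁻¹ = ((k : ZMod p)) ^ (p - 2) := by
  have := inv_pow_eq (knz h1 h2) 1
  simpa using this

lemma A_p1 (hp3 : 2 < p) : A p (p - 1) = 0 := by
  rw [A]
  have : ∀ j ∈ Finset.Icc 1 (p-1), ((j : ZMod p))⁻¹ = ((j : ZMod p)) ^ (p - 2) := by
    intro j hj
    simp only [Finset.mem_Icc] at hj
    exact inv_eq_pow hj.1 hj.2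
  rw [Finset.sum_congr rfl this, powsum,
    if_neg (fun hd => absurd (Nat.le_of_dvd (by omega) hd) (by omega))]

lemma cast_p_sub (i : ℕ) (h : i ≤ p) : (((p - i : ℕ)) : ZMod p) = -(i : ZMod p) := by
  rw [Nat.cast_sub h, ZMod.natCast_self, zero_sub]

lemma A_reflect (hp3 : 2 < p) {k : ℕ} (h1 : 1 ≤ k) (h2 : k ≤ p - 1) :
    A p (p - k) = A p k - ((k : ZMod p))⁻¹ := by
  have h2p := hp.out.two_le
  have hA : A p k = A p (k - 1) + ((k : ZMod p))⁻¹ := by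
    have : k = (k - 1) + 1 := by omega
    rw [this, A_succ]; congr 1 <;> omega
  have hIoc : ∀ n : ℕ, Finset.Icc 1 n = Finset.Ioc 0 n := fun n => by
    ext x; simp only [Finset.mem_Icc, Finset.mem_Ioc]; omega
  have hsplit : A p (p - k) + (∑ j ∈ Finset.Ioc (p - k) (p - 1), ((j : ZMod p))⁻¹)
      = A p (p - 1) := by
    rw [A, A, hIoc, hIoc]
    exact Finset.sum_Ioc_consecutive _ (by omega) (by omega)
  have hre : (∑ j ∈ Finset.Ioc (p - k) (p - 1), ((j : ZMod p))⁻¹)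
      = ∑ i ∈ Finset.Ioc 0 (k - 1), (-((i : ZMod p))⁻¹) := by
    refine Finset.sum_nbij' (fun j => p - j) (fun i => p - i) ?_ ?_ ?_ ?_ ?_
    · intro j hj; simp only [Finset.mem_Ioc] at hj ⊢; omega
    · intro i hi; simp only [Finset.mem_Ioc] at hi ⊢; omega
    · intro j hj; simp only [Finset.mem_Ioc] at hj; show p - (p - j) = j; omega
    · intro i hi; simp only [Finset.mem_Ioc] at hi; show p - (p - i) = i; omega
    · intro j hj
      simp only [Finset.mem_Ioc] at hj
      show ((j : ZMod p))⁻¹ = -(((p - j : ℕ) : ZMod p))⁻¹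
      rw [cast_p_sub j (by omega), inv_neg, neg_neg]
  rw [hre] at hsplit
  rw [A_p1 hp3] at hsplit
  have hAk1 : ∑ i ∈ Finset.Ioc 0 (k - 1), (-((i : ZMod p))⁻¹) = -(A p (k-1)) := by
    rw [A, hIoc, Finset.sum_neg_distrib]
  rw [hAk1] at hsplit
  have : A p (p - k) = A p (k - 1) := by linear_combination hsplit
  rw [this, hA]; ring

lemma sum_reflect (f : ℕ → ZMod p) :
    ∑ k ∈ Finset.Icc 1 (p - 1), f k = ∑ k ∈ Finset.Icc 1 (p - 1), f (p - k) := by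
  have h2p := hp.out.two_le
  refine Finset.sum_nbij' (fun k => p - k) (fun k => p - k) ?_ ?_ ?_ ?_ ?_
  · intro k hk; simp only [Finset.mem_Icc] at hk ⊢; omega
  · intro k hk; simp only [Finset.mem_Icc] at hk ⊢; omega
  · intro k hk; simp only [Finset.mem_Icc] at hk; show p - (p - k) = k; omega
  · intro k hk; simp only [Finset.mem_Icc] at hk; show p - (p - k) = k; omega
  · intro k hk
    simp only [Finset.mem_Icc] at hk
    show f k = f (p - (p - k))
    congr 1; omega



section ax

lemma nat_ne_zero {n : ℕ} (hn : ¬ p ∣ n) : ((n : ZMod p)) ≠ 0 := by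
  rw [Ne, ZMod.natCast_eq_zero_iff]; exact hn

lemma castK_one_div (n : ℕ) (hn : ¬ p ∣ n) : ((1 / (n : ℚ) : ℚ) : ZMod p) = ((n : ZMod p))⁻¹ := by
  rw [Rat.cast_div_of_ne_zero (by simp) (by simpa using nat_ne_zero hn),
    Rat.cast_one, Rat.cast_natCast, one_div]

lemma castK_natCast (n : ℕ) : (((n : ℚ)) : ZMod p) = (n : ZMod p) := by
  exact_mod_cast Rat.cast_natCast n

end ax

theorem main (p m : ℕ) (hp : p.Prime) (hp3 : 3 < p) (hm : 0 < m) (hmp : m < p - 1)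
    (hodd : Odd m) :
    (p : ℤ) ∣ ((∑ k ∈ Finset.Icc 1 (p - 1), H k ^ 2 / (k : ℚ) ^ m)
      - bernoulli (p - 2 - m)).num := by
  haveI : Fact p.Prime := ⟨hp⟩
  have h2p : 2 ≤ p := hp.two_le
  have hpodd : p % 2 = 1 := Nat.odd_iff.mp (hp.odd_of_ne_two (by omega))
  have hmod : m % 2 = 1 := Nat.odd_iff.mp hodd
  set K := ZMod p
  set X : ℚ := ∑ k ∈ Finset.Icc 1 (p - 1), H k ^ 2 / (k : ℚ) ^ m with hX
  set B : ℚ := bernoulli (p - 2 - m) with hB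
  -- dvd facts
  have hndvd : ∀ k : ℕ, 1 ≤ k → k ≤ p - 1 → ¬ p ∣ k := fun k h1 h2 =>
    not_dvd_of_le h1 (by omega)
  have hndvdpow : ∀ k s : ℕ, 1 ≤ k → k ≤ p - 1 → ¬ p ∣ k ^ s := by
    intro k s h1 h2 hd
    exact hndvd k h1 h2 (hp.dvd_of_dvd_pow hd)
  -- H k : good and cast
  have hGH : ∀ k : ℕ, k ≤ p - 1 → G p (H k) := by
    intro k hk
    exact G_sum fun j hj => by
      simp only [Finset.mem_Icc] at hj
      exact G_one_div j (hndvd j hj.1 (by omega))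
  have hcastH : ∀ k : ℕ, k ≤ p - 1 → ((H k : ℚ) : K) = A p k := by
    intro k hk
    rw [H, castK_sum (fun j hj => by
      simp only [Finset.mem_Icc] at hj
      exact G_one_div j (hndvd j hj.1 (by omega)))]
    refine Finset.sum_congr rfl fun j hj => ?_
    simp only [Finset.mem_Icc] at hj
    exact castK_one_div j (hndvd j hj.1 (by omega))
  -- terms
  have htermG : ∀ k ∈ Finset.Icc 1 (p-1), G p (H k ^ 2 / (k : ℚ) ^ m) := by
    intro k hk
    simp only [Finset.mem_Icc] at hk
    have hrw : H k ^ 2 / (k : ℚ) ^ m = H k ^ 2 * (1 / ((k ^ m : ℕ) : ℚ)) := by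
      push_cast; ring
    rw [hrw]
    exact G_mul (G_pow 2 (hGH k hk.2)) (G_one_div _ (hndvdpow k m hk.1 hk.2))
  have htermC : ∀ k ∈ Finset.Icc 1 (p-1),
      ((H k ^ 2 / (k : ℚ) ^ m : ℚ) : K) = (A p k) ^ 2 * (((k : K)) ^ m)⁻¹ := by
    intro k hk
    simp only [Finset.mem_Icc] at hk
    have hrw : H k ^ 2 / (k : ℚ) ^ m = H k ^ 2 * (1 / ((k ^ m : ℕ) : ℚ)) := by
      push_cast; ring
    rw [hrw, castK_mul (G_pow 2 (hGH k hk.2)) (G_one_div _ (hndvdpow k m hk.1 hk.2)),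
      castK_pow 2 (hGH k hk.2), hcastH k hk.2, castK_one_div _ (hndvdpow k m hk.1 hk.2)]
    push_cast
    ring
  have hGX : G p X := G_sum htermG
  have hcastX : ((X : ℚ) : K) = ∑ k ∈ Finset.Icc 1 (p-1), (A p k) ^ 2 * (((k : K)) ^ m)⁻¹ := by
    rw [hX, castK_sum htermG]
    exact Finset.sum_congr rfl htermC
  -- vanishing sum
  have hV : ∑ k ∈ Finset.Icc 1 (p-1), (((k : K)) ^ (m+2))⁻¹ = 0 := by
    have hcong : ∀ k ∈ Finset.Icc 1 (p-1), (((k : K)) ^ (m+2))⁻¹ = ((k:K)) ^ ((m+2)*(p-2)) := by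
      intro k hk; simp only [Finset.mem_Icc] at hk
      exact inv_pow_eq (knz hk.1 hk.2) (m+2)
    rw [Finset.sum_congr rfl hcong, powsum, if_neg]
    intro hdvd
    have hd2 : (p-1) ∣ (m+2) := by
      have hkey : (m+2)*(p-2) + (m+2) = (p-1)*(m+2) := by
        zify [show (2:ℕ) ≤ p by omega, show (1:ℕ) ≤ p by omega]; ring
      have h1 : (p-1) ∣ (m+2)*(p-2) + (m+2) := by rw [hkey]; exact dvd_mul_right _ _
      exact (Nat.dvd_add_right hdvd).mp h1
    obtain ⟨c, hc⟩ := hd2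
    rcases c with _ | _ | c
    · omega
    · omega
    · have hle : (p-1)*2 ≤ (p-1)*(c+2) := Nat.mul_le_mul_left _ (by omega)
      rw [← hc] at hle
      omega
  set T : K := ∑ k ∈ Finset.Icc 1 (p-1), (A p k) * (((k : K)) ^ (m+1))⁻¹ with hT
  set U : K := ∑ k ∈ Finset.Icc 1 (p-1), (A p (k-1)) * (((k : K)) ^ (m+1))⁻¹ with hU
  -- reflection step
  have hstep : ∀ k ∈ Finset.Icc 1 (p-1),
      (A p (p-k))^2 * ((((p-k : ℕ) : K)) ^ m)⁻¹
      = -((A p k)^2 * (((k:K))^m)⁻¹) + 2 * (A p k * (((k:K))^(m+1))⁻¹)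
        - (((k:K))^(m+2))⁻¹ := by
    intro k hk
    simp only [Finset.mem_Icc] at hk
    have hx : ((k:K)) ≠ 0 := knz hk.1 hk.2
    rw [A_reflect (by omega) hk.1 hk.2, cast_p_sub k (by omega), hodd.neg_pow, inv_neg]
    have hxm : ((k:K))^m ≠ 0 := pow_ne_zero _ hx
    have hxm1 : ((k:K))^(m+1) ≠ 0 := pow_ne_zero _ hx
    have hxm2 : ((k:K))^(m+2) ≠ 0 := pow_ne_zero _ hx
    field_simp
    ring
  have hrefl : (∑ k ∈ Finset.Icc 1 (p-1), (A p k) ^ 2 * (((k : K)) ^ m)⁻¹)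
      = -(∑ k ∈ Finset.Icc 1 (p-1), (A p k) ^ 2 * (((k : K)) ^ m)⁻¹) + 2 * T - 0 := by
    conv_lhs => rw [sum_reflect (fun k => (A p k)^2 * (((k:K))^m)⁻¹)]
    rw [Finset.sum_congr rfl hstep, Finset.sum_sub_distrib, Finset.sum_add_distrib, hV,
      Finset.sum_neg_distrib, hT, ← Finset.mul_sum]
  have h2ne : (2 : K) ≠ 0 := by
    have h := nat_ne_zero (p := p) (n := 2) (not_dvd_of_le (p := p) (by omega) (by omega))
    simpa using h
  have hXT : ((X : ℚ) : K) = T := by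
    rw [hcastX]
    refine mul_left_cancel₀ h2ne ?_
    linear_combination hrefl
  -- T = U
  have hTU : T = U := by
    have hsplit : ∀ k ∈ Finset.Icc 1 (p-1), A p k * (((k:K))^(m+1))⁻¹
        = A p (k-1) * (((k:K))^(m+1))⁻¹ + (((k:K))^(m+2))⁻¹ := by
      intro k hk
      simp only [Finset.mem_Icc] at hk
      have hx : ((k:K)) ≠ 0 := knz hk.1 hk.2
      obtain ⟨k', rfl⟩ : ∃ k', k = k' + 1 := ⟨k - 1, by omega⟩
      rw [A_succ, Nat.add_sub_cancel, add_mul]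
      congr 1
      rw [← mul_inv, ← pow_succ']
    rw [hT, hU, Finset.sum_congr rfl hsplit, Finset.sum_add_distrib, hV, add_zero]
  -- Faulhaber
  set c : ℕ → K := fun i =>
    ((bernoulli i : ℚ) : K) * (((p-1).choose i : ℕ) : K) * ((((p-1 : ℕ)) : K))⁻¹ with hc
  have hp1K : (((p-1 : ℕ)) : K) = -1 := by
    rw [cast_p_sub 1 (by omega), Nat.cast_one]
  have hfaul : ∀ k ∈ Finset.Icc 1 (p-1),
      A p (k-1) = ∑ i ∈ Finset.range (p-1), c i * ((k:K))^(p-1-i) := by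
    intro k hk
    simp only [Finset.mem_Icc] at hk
    have h1 : p - 2 + 1 = p - 1 := by omega
    have hfq := sum_range_pow k (p-2)
    rw [h1] at hfq
    have hden : ((p - 2 : ℕ) : ℚ) + 1 = ((p - 1 : ℕ) : ℚ) := by
      rw [Nat.cast_sub (by omega : 2 ≤ p), Nat.cast_sub (by omega : 1 ≤ p)]
      push_cast; ring
    rw [hden] at hfq
    have hterm2 : ∀ i ∈ Finset.range (p-1),
        G p (bernoulli i * ((p-1).choose i : ℚ) * (k:ℚ)^(p-1-i) / ((p-1 : ℕ) : ℚ)) ∧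
        ((bernoulli i * ((p-1).choose i : ℚ) * (k:ℚ)^(p-1-i) / ((p-1 : ℕ) : ℚ) : ℚ) : K)
          = c i * ((k:K))^(p-1-i) := by
      intro i hi
      simp only [Finset.mem_range] at hi
      have hd : bernoulli i * ((p-1).choose i : ℚ) * (k:ℚ)^(p-1-i) / ((p-1 : ℕ) : ℚ)
          = bernoulli i * ((p-1).choose i : ℚ) * (k:ℚ)^(p-1-i) * (1 / ((p-1 : ℕ) : ℚ)) := by
        ring
      have hGb := G_bernoulli i hi
      have hg : G p (bernoulli i * ((p-1).choose i : ℚ) * (k:ℚ)^(p-1-i)) :=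
        G_mul (G_mul hGb (G_natCast _)) (G_pow _ (G_natCast k))
      have hgd := G_one_div (p-1) (not_dvd_of_le (p := p) (by omega) (by omega))
      constructor
      · rw [hd]; exact G_mul hg hgd
      · rw [hd, castK_mul hg hgd,
          castK_mul (G_mul hGb (G_natCast _)) (G_pow _ (G_natCast k)),
          castK_mul hGb (G_natCast _),
          castK_pow _ (G_natCast k), castK_natCast, castK_natCast,
          castK_one_div _ (not_dvd_of_le (p := p) (by omega) (by omega))]
        simp only [hc]
        ring
    have hLHS : ((∑ j ∈ Finset.range k, (j:ℚ)^(p-2) : ℚ) : K) = A p (k-1) := by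
      have hnat : (∑ j ∈ Finset.range k, (j:ℚ)^(p-2))
          = ((∑ j ∈ Finset.range k, j^(p-2) : ℕ) : ℚ) := by push_cast; rfl
      rw [hnat, castK_natCast]
      push_cast
      have hrange : Finset.range k = insert 0 (Finset.Ioc 0 (k-1)) := by
        ext x; simp only [Finset.mem_range, Finset.mem_insert, Finset.mem_Ioc]; omega
      rw [hrange, Finset.sum_insert (by simp), Nat.cast_zero,
        zero_pow (by omega : p - 2 ≠ 0), zero_add, A]
      have hIoc : Finset.Icc 1 (k-1) = Finset.Ioc 0 (k-1) := by
        ext x; simp only [Finset.mem_Icc, Finset.mem_Ioc]; omega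
      rw [hIoc]
      refine Finset.sum_congr rfl fun j hj => ?_
      simp only [Finset.mem_Ioc] at hj
      exact (inv_eq_pow hj.1 (by omega)).symm
    rw [← hLHS, hfq, castK_sum (fun i hi => (hterm2 i hi).1)]
    exact Finset.sum_congr rfl (fun i hi => (hterm2 i hi).2)
  -- evaluate U
  have hGB : G p B := G_bernoulli _ (by omega)
  have hUB : U = ((B : ℚ) : K) := by
    have hkey : ∀ i, i < p - 1 →
        ((p-1-i) + (m+1)*(p-2)) + (m+1+i) = (p-1)*(m+2) := by
      intro i hi
      zify [show i ≤ p - 1 by omega, show (2:ℕ) ≤ p by omega, show (1:ℕ) ≤ p by omega]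
      ring
    have hdvd_iff : ∀ i, i < p - 1 →
        ((p-1) ∣ ((p-1-i) + (m+1)*(p-2)) ↔ i = p-2-m) := by
      intro i hi
      constructor
      · intro hdvd
        have hsum : (p-1) ∣ ((p-1-i) + (m+1)*(p-2)) + (m+1+i) := by
          rw [hkey i hi]; exact dvd_mul_right _ _
        have hx : (p-1) ∣ (m+1+i) := (Nat.dvd_add_right hdvd).mp hsum
        obtain ⟨cc, hcc⟩ := hx
        rcases cc with _ | _ | cc
        · omega
        · omega
        · have hle : (p-1)*2 ≤ (p-1)*(cc+2) := Nat.mul_le_mul_left _ (by omega)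
          rw [← hcc] at hle
          omega
      · rintro rfl
        have hxv : m + 1 + (p-2-m) = p - 1 := by omega
        have hdx : (p-1) ∣ (m+1+(p-2-m)) := by rw [hxv]
        have heq := Nat.eq_sub_of_add_eq (hkey _ hi)
        rw [heq]
        exact Nat.dvd_sub (dvd_mul_right _ _) hdx
    calc U = ∑ k ∈ Finset.Icc 1 (p-1), ∑ i ∈ Finset.range (p-1),
            c i * ((k:K))^(p-1-i) * (((k:K))^(m+1))⁻¹ := by
          rw [hU]
          refine Finset.sum_congr rfl fun k hk => ?_
          rw [hfaul k hk, Finset.sum_mul]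
      _ = ∑ i ∈ Finset.range (p-1), ∑ k ∈ Finset.Icc 1 (p-1),
            c i * ((k:K))^(p-1-i) * (((k:K))^(m+1))⁻¹ := Finset.sum_comm
      _ = ∑ i ∈ Finset.range (p-1),
            c i * (if (p-1) ∣ ((p-1-i) + (m+1)*(p-2)) then (-1:K) else 0) := by
          refine Finset.sum_congr rfl fun i hi => ?_
          rw [← powsum, Finset.mul_sum]
          refine Finset.sum_congr rfl fun k hk => ?_
          simp only [Finset.mem_Icc] at hk
          rw [mul_assoc, inv_pow_eq (knz hk.1 hk.2), ← pow_add]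
      _ = c (p-2-m) * (if (p-1) ∣ ((p-1-(p-2-m)) + (m+1)*(p-2)) then (-1:K) else 0) := by
          refine Finset.sum_eq_single _ ?_ ?_
          · intro i hi hne
            simp only [Finset.mem_range] at hi
            rw [if_neg (fun hdvd => hne ((hdvd_iff i hi).mp hdvd)), mul_zero]
          · intro habs
            exact absurd (Finset.mem_range.mpr (by omega)) habs
      _ = c (p-2-m) * (-1) := by
          rw [if_pos ((hdvd_iff _ (by omega)).mpr rfl)]
      _ = ((B : ℚ) : K) := by
          simp only [hc]
          rw [choose_cast (p-2-m) (by omega), hp1K, inv_neg_one]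
          have heven : ((-1 : K))^(p-2-m) = 1 :=
            Even.neg_one_pow (Nat.even_iff.mpr (by omega))
          rw [heven, hB]
          ring
  -- conclude
  have hq0 : (((X - B : ℚ)) : K) = 0 := by
    rw [castK_sub hGX hGB, hXT, hTU, hUB, sub_self]
  have hGq : G p (X - B) := by
    have h := G_add hGX (G_neg hGB)
    simpa [sub_eq_add_neg] using h
  rw [Rat.cast_def] at hq0
  have hdenK : (((X - B).den : ℕ) : K) ≠ 0 := (G_iff _).mp hGq
  rcases div_eq_zero_iff.mp hq0 with h | h
  · exact (ZMod.intCast_zmod_eq_zero_iff_dvd _ p).mp h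
  · exact absurd h hdenK


end Stmt16Aux

theorem stmt16 (p m : ℕ) (hp : p.Prime) (hp3 : 3 < p) (hm : 0 < m) (hmp : m < p - 1)
    (hodd : Odd m) :
    (p : ℤ) ∣ ((∑ k ∈ Finset.Icc 1 (p - 1), H k ^ 2 / (k : ℚ) ^ m)
      - bernoulli (p - 2 - m)).num := Stmt16Aux.main p m hp hp3 hm hmp hodd
end

section
/- For every prime p > 5, ∑_{k=1}^{p-1} k⁴ H_k² ≡ (5743/27000) p − 7/225 (mod p²), as rationals with denominators coprime to p. -/
open Finset

theorem closed_form (n : ℕ) :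
    ∑ k ∈ Finset.Icc 1 n, (k : ℚ) ^ 4 * H k ^ 2 =
      ((n:ℚ)^5/5 + (n:ℚ)^4/2 + (n:ℚ)^3/3 - (n:ℚ)/30) * H n ^ 2
      + (-2*(n:ℚ)^5/25 + (n:ℚ)^4/20 + 13*(n:ℚ)^3/90 - (n:ℚ)^2/12 - 7*(n:ℚ)/225 + 1/30) * H n
      + (2*(n:ℚ)^5/125 - 9*(n:ℚ)^4/400 + 109*(n:ℚ)^3/5400 - 7*(n:ℚ)^2/720 - 1007*(n:ℚ)/27000) := by
  induction n with
  | zero => simp [H]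
  | succ n ih =>
    have h1 : (1:ℕ) ≤ n + 1 := by omega
    rw [Finset.sum_Icc_succ_top h1, ih]
    have hH : H (n+1) = H n + 1/((n:ℚ)+1) := by
      rw [H, H, Finset.sum_Icc_succ_top h1]; push_cast; ring
    rw [hH]
    have hne : ((n:ℚ)+1) ≠ 0 := by positivity
    push_cast
    field_simp
    ring

theorem powsum_dvd (p : ℕ) (hp : p.Prime) (hp5 : 5 < p) :
    p ∣ ∑ j ∈ Finset.Icc 1 (p - 1), j ^ (p - 3) := by
  haveI : Fact p.Prime := ⟨hp⟩
  have h0 : ((∑ j ∈ Finset.Icc 1 (p - 1), j ^ (p - 3) : ℕ) : ZMod p) = 0 := by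
    push_cast
    have e1 : ∑ j ∈ Finset.Icc 1 (p - 1), (j : ZMod p) ^ (p - 3)
        = ∑ j ∈ Finset.range p, (j : ZMod p) ^ (p - 3) := by
      have hins : Finset.range p = insert 0 (Finset.Icc 1 (p-1)) := by
        ext x; simp [Finset.mem_range, Finset.mem_Icc]; omega
      rw [hins, Finset.sum_insert (by simp), Nat.cast_zero,
        zero_pow (by omega : p - 3 ≠ 0), zero_add]
    have e2 : ∑ j ∈ Finset.range p, (j : ZMod p) ^ (p - 3)
        = ∑ x : ZMod p, x ^ (p - 3) := by
      refine Finset.sum_nbij' (fun j => (j : ZMod p)) (fun x => x.val) ?_ ?_ ?_ ?_ ?_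
      · intros; exact Finset.mem_univ _
      · intro x _; exact Finset.mem_range.mpr (ZMod.val_lt x)
      · intro a ha; exact ZMod.val_cast_of_lt (Finset.mem_range.mp ha)
      · intro x _; exact ZMod.natCast_rightInverse x
      · intro a _; rfl
    rw [e1, e2]
    exact FiniteField.sum_pow_lt_card_sub_one (K := ZMod p) (p - 3)
      (by rw [ZMod.card]; omega)
  exact (ZMod.natCast_eq_zero_iff _ _).mp h0

theorem wolstenholme_s17 (p : ℕ) (hp : p.Prime) (hp5 : 5 < p) :
    padicNorm p (H (p-1)) ≤ (p:ℚ)⁻¹ * (p:ℚ)⁻¹ := by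
  haveI : Fact p.Prime := ⟨hp⟩
  have hp1 : (1:ℕ) < p := by omega
  -- norm of a nat not divisible by p is 1
  have hnorm1 : ∀ m : ℕ, ¬ p ∣ m → padicNorm p (m:ℚ) = 1 := by
    intro m hm; exact (padicNorm.nat_eq_one_iff m).mpr hm
  have hndvd : ∀ j ∈ Finset.Icc 1 (p-1), ¬ p ∣ j := by
    intro j hj hdvd
    have := Finset.mem_Icc.mp hj
    have := Nat.le_of_dvd (by omega) hdvd
    omega
  have hjne : ∀ j ∈ Finset.Icc 1 (p-1), (j:ℚ) ≠ 0 := by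
    intro j hj
    have := Finset.mem_Icc.mp hj
    exact Nat.cast_ne_zero.mpr (by omega)
  have hpjne : ∀ j ∈ Finset.Icc 1 (p-1), (p:ℚ) - (j:ℚ) ≠ 0 := by
    intro j hj
    have h := Finset.mem_Icc.mp hj
    have : ((p - j : ℕ) : ℚ) = (p:ℚ) - j := by
      rw [Nat.cast_sub (by omega)]
    rw [← this]
    exact Nat.cast_ne_zero.mpr (by omega)
  have hnormj : ∀ j ∈ Finset.Icc 1 (p-1), padicNorm p (j:ℚ) = 1 :=
    fun j hj => hnorm1 j (hndvd j hj)
  have hnormpj : ∀ j ∈ Finset.Icc 1 (p-1), padicNorm p ((p:ℚ) - j) = 1 := by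
    intro j hj
    have h := Finset.mem_Icc.mp hj
    have e : ((p - j : ℕ) : ℚ) = (p:ℚ) - j := by rw [Nat.cast_sub (by omega)]
    rw [← e]
    exact hnorm1 _ (by intro hdvd; have := Nat.le_of_dvd (by omega) hdvd; omega)
  -- reversal
  have hrev : H (p-1) = ∑ j ∈ Finset.Icc 1 (p-1), (1:ℚ) / ((p:ℚ) - j) := by
    rw [H]
    refine Finset.sum_nbij' (fun j => p - j) (fun j => p - j) ?_ ?_ ?_ ?_ ?_
    · intro a ha; have := Finset.mem_Icc.mp ha; simp only [Finset.mem_Icc]; omega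
    · intro a ha; have := Finset.mem_Icc.mp ha; simp only [Finset.mem_Icc]; omega
    · intro a ha; have := Finset.mem_Icc.mp ha; omega
    · intro a ha; have := Finset.mem_Icc.mp ha; omega
    · intro a ha
      have h := Finset.mem_Icc.mp ha
      rw [Nat.cast_sub (by omega)]
      congr 1
      ring
  -- pairs identity
  have h2H : 2 * H (p-1) = (p:ℚ) * ∑ j ∈ Finset.Icc 1 (p-1),
      (1:ℚ) / ((j:ℚ) * ((p:ℚ) - j)) := by
    rw [two_mul]
    nth_rewrite 2 [hrev]
    rw [H, ← Finset.sum_add_distrib, Finset.mul_sum]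
    refine Finset.sum_congr rfl ?_
    intro j hj
    have h1 := hjne j hj
    have h2 := hpjne j hj
    field_simp
    try ring
  set G := ∑ j ∈ Finset.Icc 1 (p-1), (1:ℚ) / ((j:ℚ) * ((p:ℚ) - j)) with hG
  set H2 := ∑ j ∈ Finset.Icc 1 (p-1), (1:ℚ) / (j:ℚ)^2 with hH2def
  have hpnorm : padicNorm p (p:ℚ) = (p:ℚ)⁻¹ := padicNorm.padicNorm_p hp1
  -- G + H2 small
  have hGH2 : padicNorm p (G + H2) ≤ (p:ℚ)⁻¹ := by
    have he : G + H2 = ∑ j ∈ Finset.Icc 1 (p-1),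
        (p:ℚ) / ((j:ℚ)^2 * ((p:ℚ) - j)) := by
      rw [hG, hH2def, ← Finset.sum_add_distrib]
      refine Finset.sum_congr rfl ?_
      intro j hj
      have h1 := hjne j hj
      have h2 := hpjne j hj
      field_simp
      ring
    rw [he]
    refine padicNorm.sum_le' ?_ (by positivity)
    intro j hj
    rw [padicNorm.div, padicNorm.mul, pow_two, padicNorm.mul,
      hnormj j hj, hnormpj j hj, hpnorm]
    simp
  -- H2 small
  have hH2 : padicNorm p H2 ≤ (p:ℚ)⁻¹ := by
    have hsplit : H2 = ((∑ j ∈ Finset.Icc 1 (p-1), j ^ (p-3) : ℕ) : ℚ)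
        + ∑ j ∈ Finset.Icc 1 (p-1), ((1:ℚ)/(j:ℚ)^2 - (j:ℚ)^(p-3)) := by
      push_cast
      rw [hH2def, ← Finset.sum_add_distrib]
      refine Finset.sum_congr rfl ?_
      intro j hj
      ring
    rw [hsplit]
    refine le_trans padicNorm.nonarchimedean (max_le ?_ ?_)
    · have hdvd := powsum_dvd p hp hp5
      have : ((p^1 : ℕ) : ℤ) ∣ ((∑ j ∈ Finset.Icc 1 (p-1), j ^ (p-3) : ℕ) : ℤ) := by
        push_cast [pow_one]
        exact_mod_cast Int.natCast_dvd_natCast.mpr hdvd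
      have hle := (padicNorm.dvd_iff_norm_le (p := p) (n := 1)
        (z := ((∑ j ∈ Finset.Icc 1 (p-1), j ^ (p-3) : ℕ) : ℤ))).mp this
      rw [show ((((∑ j ∈ Finset.Icc 1 (p-1), j ^ (p-3) : ℕ) : ℤ)) : ℚ)
        = ((∑ j ∈ Finset.Icc 1 (p-1), j ^ (p-3) : ℕ) : ℚ) by push_cast; ring] at hle
      simpa using hle
    · refine padicNorm.sum_le' ?_ (by positivity)
      intro j hj
      have h1 := hjne j hj
      have he : (1:ℚ)/(j:ℚ)^2 - (j:ℚ)^(p-3)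
          = ((1 - ((j:ℤ))^(p-1) : ℤ) : ℚ) / (j:ℚ)^2 := by
        have hexp : (p - 3) + 2 = p - 1 := by omega
        push_cast
        rw [← hexp, pow_add]
        field_simp
      rw [he, padicNorm.div]
      have hfermat : ((p^1:ℕ):ℤ) ∣ (1 - ((j:ℤ))^(p-1) : ℤ) := by
        rw [pow_one]
        have hj0 : ((j : ZMod p)) ≠ 0 := by
          rw [Ne, ZMod.natCast_eq_zero_iff]
          exact hndvd j hj
        have : ((1 - ((j:ℤ))^(p-1) : ℤ) : ZMod p) = 0 := by
          push_cast
          rw [ZMod.pow_card_sub_one_eq_one hj0]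
          ring
        exact_mod_cast (ZMod.intCast_zmod_eq_zero_iff_dvd _ _).mp this
      have hnum := (padicNorm.dvd_iff_norm_le (p := p) (n := 1)).mp hfermat
      have hden : padicNorm p ((j:ℚ)^2) = 1 := by
        rw [pow_two, padicNorm.mul, hnormj j hj]; ring
      rw [hden, div_one]
      simpa using hnum
  -- G small
  have hGsmall : padicNorm p G ≤ (p:ℚ)⁻¹ := by
    have : G = (G + H2) - H2 := by ring
    rw [this]
    exact le_trans padicNorm.sub (max_le hGH2 hH2)
  -- conclude
  have hHval : H (p-1) = (p:ℚ) * G / 2 := by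
    field_simp at h2H ⊢
    linarith [h2H]
  rw [hHval, padicNorm.div, padicNorm.mul, hpnorm]
  have h2norm : padicNorm p (2:ℚ) = 1 := by
    rw [show (2:ℚ) = ((2:ℕ):ℚ) by norm_num]
    exact hnorm1 2 (by intro h; have := Nat.le_of_dvd (by norm_num) h; omega)
  rw [h2norm, div_one]
  have := padicNorm.nonneg (p := p) G
  have hppos : (0:ℚ) < (p:ℚ)⁻¹ := by positivity
  calc (p:ℚ)⁻¹ * padicNorm p G ≤ (p:ℚ)⁻¹ * (p:ℚ)⁻¹ := by
        exact mul_le_mul_of_nonneg_left hGsmall (le_of_lt hppos)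

theorem stmt17 (p : ℕ) (hp : p.Prime) (hp5 : 5 < p) :
    (p : ℤ) ^ 2 ∣ ((∑ k ∈ Finset.Icc 1 (p - 1), (k : ℚ) ^ 4 * H k ^ 2)
      - (5743 / 27000 * (p : ℚ) - 7 / 225)).num := by
  haveI : Fact p.Prime := ⟨hp⟩
  have hp1 : (1:ℕ) < p := by omega
  set q : ℚ := (∑ k ∈ Finset.Icc 1 (p - 1), (k : ℚ) ^ 4 * H k ^ 2)
      - (5743 / 27000 * (p : ℚ) - 7 / 225) with hqdef
  -- not dividing 2^a 3^b 5^c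
  have hnd : ∀ a b c : ℕ, ¬ p ∣ 2^a * 3^b * 5^c := by
    intro a b c h
    rcases (Nat.Prime.dvd_mul hp).mp h with h' | h'
    · rcases (Nat.Prime.dvd_mul hp).mp h' with h'' | h''
      · have := Nat.le_of_dvd (by norm_num) (Nat.Prime.dvd_of_dvd_pow hp h''); omega
      · have := Nat.le_of_dvd (by norm_num) (Nat.Prime.dvd_of_dvd_pow hp h''); omega
    · have := Nat.le_of_dvd (by norm_num) (Nat.Prime.dvd_of_dvd_pow hp h'); omega
  have hnorm235 : ∀ m : ℤ, (∃ a b c : ℕ, m = 2^a*3^b*5^c) → padicNorm p ((m:ℤ):ℚ) = 1 := by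
    rintro m ⟨a, b, c, rfl⟩
    rw [padicNorm.int_eq_one_iff]
    intro hd
    refine hnd a b c ?_
    have : ((2^a*3^b*5^c : ℕ) : ℤ) = (2:ℤ)^a*3^b*5^c := by push_cast; ring
    exact_mod_cast this ▸ hd
  set y : ℤ := (p:ℤ) - 1 with hy
  set zA : ℤ := 6*y^5+15*y^4+10*y^3-y with hzA
  set zB : ℤ := -72*y^5+45*y^4+130*y^3-75*y^2-28*y+30 with hzB
  set zR : ℤ := 864*(p:ℤ)^3-5535*(p:ℤ)^2+14590*(p:ℤ)-19725 with hzR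
  have hcast : ((p - 1 : ℕ) : ℚ) = (p:ℚ) - 1 := by
    rw [Nat.cast_sub (by omega), Nat.cast_one]
  have hq : q = ((zA:ℚ)/((30:ℤ):ℚ)) * H (p-1) ^ 2 + ((zB:ℚ)/((900:ℤ):ℚ)) * H (p-1)
      + (p:ℚ)^2 * ((zR:ℚ)/((54000:ℤ):ℚ)) := by
    rw [hqdef, closed_form (p-1), hcast, hzA, hzB, hzR, hy]
    push_cast
    ring
  have hw := wolstenholme_s17 p hp hp5
  have ht1 : (0:ℚ) ≤ (p:ℚ)⁻¹ * (p:ℚ)⁻¹ := by positivity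
  have htle1 : (p:ℚ)⁻¹ * (p:ℚ)⁻¹ ≤ 1 := by
    have h1 : (1:ℚ) ≤ (p:ℚ) := by exact_mod_cast Nat.one_le_iff_ne_zero.mpr (by omega)
    have h2 := inv_le_one_of_one_le₀ h1
    have h3 : (0:ℚ) < (p:ℚ)⁻¹ := by positivity
    nlinarith
  have hbound : padicNorm p q ≤ (p:ℚ)⁻¹ * (p:ℚ)⁻¹ := by
    rw [hq]
    refine le_trans padicNorm.nonarchimedean (max_le
      (le_trans padicNorm.nonarchimedean (max_le ?_ ?_)) ?_)
    · rw [padicNorm.mul, padicNorm.div, hnorm235 30 ⟨1,1,1, by norm_num⟩, div_one,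
        pow_two, padicNorm.mul]
      have ha := padicNorm.of_int (p := p) zA
      have h0a := padicNorm.nonneg (p := p) (zA:ℚ)
      have h0h := padicNorm.nonneg (p := p) (H (p-1))
      nlinarith
    · rw [padicNorm.mul, padicNorm.div, hnorm235 900 ⟨2,2,2, by norm_num⟩, div_one]
      have hb := padicNorm.of_int (p := p) zB
      have h0b := padicNorm.nonneg (p := p) (zB:ℚ)
      have h0h := padicNorm.nonneg (p := p) (H (p-1))
      nlinarith
    · rw [padicNorm.mul, padicNorm.div, hnorm235 54000 ⟨4,3,3, by norm_num⟩, div_one,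
        pow_two, padicNorm.mul, padicNorm.padicNorm_p hp1]
      have hr := padicNorm.of_int (p := p) zR
      have h0r := padicNorm.nonneg (p := p) (zR:ℚ)
      have hpinv : (0:ℚ) < (p:ℚ)⁻¹ := by positivity
      nlinarith
  -- conclude divisibility
  have hnum : padicNorm p ((q.num : ℤ) : ℚ) ≤ (p:ℚ) ^ (-(2:ℕ) : ℤ) := by
    have he : ((q.num : ℤ) : ℚ) = q * ((q.den : ℤ) : ℚ) := by
      push_cast
      have hd0 : ((q.den:ℚ)) ≠ 0 := by exact_mod_cast q.den_ne_zero
      have h := Rat.num_div_den q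
      rw [div_eq_iff hd0] at h
      exact h
    rw [he, padicNorm.mul]
    have hden : padicNorm p ((q.den : ℤ):ℚ) ≤ 1 := padicNorm.of_int _
    have h0q := padicNorm.nonneg (p := p) q
    have h0d := padicNorm.nonneg (p := p) ((q.den:ℤ):ℚ)
    have hzp : ((p:ℚ)) ^ (-(2:ℕ) : ℤ) = (p:ℚ)⁻¹ * (p:ℚ)⁻¹ := by
      rw [zpow_neg, zpow_natCast, pow_two, mul_inv]
    rw [hzp]
    nlinarith
  have := (padicNorm.dvd_iff_norm_le (p := p) (n := 2) (z := q.num)).mpr hnum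
  exact_mod_cast this
end
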